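/- arXiv:2601.13756 — 5 statements merged into one kernel-verified Lean document; each statement's English description precedes it below -/
import Mathlib

section
/- For every n ∈ ℕ with n ≥ 1, the problem of minimizing σ(B(λ)) over the feasible set Λ_n admits a minimizer, this minimizer is unique, and it satisfies the constraint with equality: (1/(n+1)) Σ_{i=0}^n λ̄_i = 1. -/
open Real

/-- The `(n+2) × (n+2)` symmetric tridiagonal matrix `B(λ)` with zero diagonal and
entries `λ_{j}^{-1/2}` on the sub/super-diagonals (0-based indexing: the entry in
positions `(i, i+1)` and `(i+1, i)` is `(l i)^{-1/2}` for `i = 0, …, n`). -/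
noncomputable def Bmat (n : ℕ) (l : Fin (n+1) → ℝ) :
    Matrix (Fin (n+2)) (Fin (n+2)) ℝ :=
  Matrix.of fun i j =>
    if h1 : (i : ℕ) + 1 = (j : ℕ) then
      l ⟨(i : ℕ), by have := j.isLt; omega⟩ ^ (-(1/2) : ℝ)
    else if h2 : (j : ℕ) + 1 = (i : ℕ) then
      l ⟨(j : ℕ), by have := i.isLt; omega⟩ ^ (-(1/2) : ℝ)
    else 0

/-- The largest eigenvalue (Perron root) of `B(λ)`. -/
noncomputable def sigmaB (n : ℕ) (l : Fin (n+1) → ℝ) : ℝ :=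
  sSup {μ : ℝ | ∃ v : Fin (n+2) → ℝ, v ≠ 0 ∧ (Bmat n l).mulVec v = μ • v}

/-- The feasible set `Λ_n`: all entries positive and `(1/(n+1)) ∑ λ_i ≤ 1`. -/
def Feasible (n : ℕ) (l : Fin (n+1) → ℝ) : Prop :=
  (∀ i, 0 < l i) ∧ (∑ i, l i) / ((n : ℝ) + 1) ≤ 1

/-- `λ̄` is a minimizer of `σ(B(·))` over `Λ_n`. -/
def IsMinimizer (n : ℕ) (l : Fin (n+1) → ℝ) : Prop :=
  Feasible n l ∧ ∀ m : Fin (n+1) → ℝ, Feasible n m → sigmaB n l ≤ sigmaB n m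

/-- A Perron vector of `B(λ)`: positive entries, Euclidean norm one,
eigenvector for the Perron root. -/
def IsPerronVector (n : ℕ) (l : Fin (n+1) → ℝ) (v : Fin (n+2) → ℝ) : Prop :=
  (∀ i, 0 < v i) ∧ (∑ i, v i ^ 2) = 1 ∧ (Bmat n l).mulVec v = sigmaB n l • v


namespace Perron
open Matrix
variable {n : ℕ}
noncomputable def A (l : Fin (n+1) → ℝ) (t : ℕ) : ℝ :=
  if h : t < n+1 then l ⟨t, h⟩ ^ (-(1/2) : ℝ) else 0

lemma A_nonneg {l : Fin (n+1) → ℝ} (hl : ∀ i, 0 < l i) (t : ℕ) : 0 ≤ A l t := by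
  unfold A; split
  · exact (Real.rpow_pos_of_pos (hl _) _).le
  · exact le_refl 0

lemma A_coe {l : Fin (n+1) → ℝ} (k : Fin (n+1)) : A l (k : ℕ) = l k ^ (-(1/2) : ℝ) := by
  rw [A, dif_pos k.isLt]

lemma Bmat_eq_sum_ite (l : Fin (n+1) → ℝ) (i j : Fin (n+2)) :
    Bmat n l i j = (if (i:ℕ)+1 = (j:ℕ) then A l i else 0)
      + (if (j:ℕ)+1 = (i:ℕ) then A l j else 0) := by
  have hi := i.isLt; have hj := j.isLt
  simp only [Bmat, Matrix.of_apply, A]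
  split_ifs with h1 h2 h2' h3 <;> first
    | omega
    | simp

lemma Bmat_castSucc_succ (l : Fin (n+1) → ℝ) (k : Fin (n+1)) :
    Bmat n l k.castSucc k.succ = l k ^ (-(1/2) : ℝ) := by
  rw [Bmat_eq_sum_ite, if_pos (by simp), if_neg (by simp only [Fin.coe_castSucc, Fin.val_succ]; omega)]

  simpa using A_coe (l := l) k

lemma Bmat_succ_castSucc (l : Fin (n+1) → ℝ) (k : Fin (n+1)) :
    Bmat n l k.succ k.castSucc = l k ^ (-(1/2) : ℝ) := by
  rw [Bmat_eq_sum_ite, if_neg (by simp only [Fin.val_succ, Fin.coe_castSucc]; omega), if_pos (by simp)]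
  simpa using A_coe (l := l) k

lemma Bmat_nonneg {l : Fin (n+1) → ℝ} (hl : ∀ i, 0 < l i) (i j : Fin (n+2)) :
    0 ≤ Bmat n l i j := by
  rw [Bmat_eq_sum_ite]
  have h1 := A_nonneg hl (i:ℕ); have h2 := A_nonneg hl (j:ℕ)
  split_ifs <;> linarith

lemma Bmat_transpose (l : Fin (n+1) → ℝ) : (Bmat n l)ᵀ = Bmat n l := by
  ext i j
  rw [Matrix.transpose_apply, Bmat_eq_sum_ite, Bmat_eq_sum_ite]
  ring

lemma quadform (l : Fin (n+1) → ℝ) (v : Fin (n+2) → ℝ) :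
    (Bmat n l).mulVec v ⬝ᵥ v
      = ∑ k : Fin (n+1), 2 * (l k ^ (-(1/2):ℝ)) * (v k.castSucc * v k.succ) := by
  have expand : (Bmat n l).mulVec v ⬝ᵥ v
      = ∑ i : Fin (n+2), ∑ j : Fin (n+2), Bmat n l i j * v j * v i := by
    simp [dotProduct, Matrix.mulVec, Finset.sum_mul]
  rw [expand]
  have split : ∀ i j, Bmat n l i j * v j * v i
      = (if (i:ℕ)+1 = (j:ℕ) then A l i * v j * v i else 0)
        + (if (j:ℕ)+1 = (i:ℕ) then A l j * v j * v i else 0) := by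
    intro i j; rw [Bmat_eq_sum_ite]; split_ifs <;> ring
  simp only [split, Finset.sum_add_distrib]
  have S1 : ∑ i : Fin (n+2), ∑ j : Fin (n+2),
      (if (i:ℕ)+1 = (j:ℕ) then A l i * v j * v i else 0)
      = ∑ k : Fin (n+1), (l k ^ (-(1/2):ℝ)) * (v k.castSucc * v k.succ) := by
    rw [Fin.sum_univ_castSucc]
    have hlast : ∑ j : Fin (n+2),
        (if ((Fin.last (n+1) : Fin (n+2)):ℕ)+1 = (j:ℕ) then A l (Fin.last (n+1)) * v j * v (Fin.last (n+1)) else 0) = 0 := by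
      apply Finset.sum_eq_zero; intro j _
      rw [if_neg (by have := j.isLt; simp; omega)]
    rw [hlast, add_zero]
    apply Finset.sum_congr rfl
    intro k _
    have : ∀ j : Fin (n+2), (((k.castSucc : Fin (n+2)):ℕ)+1 = (j:ℕ)) = (j = k.succ) := by
      intro j
      simp [Fin.ext_iff, eq_comm]
    simp only [this]
    rw [Finset.sum_ite_eq' Finset.univ k.succ]
    have hA : A l ((k.castSucc : Fin (n+2)) : ℕ) = l k ^ (-(1/2):ℝ) := by
      rw [show ((k.castSucc : Fin (n+2)) : ℕ) = (k : ℕ) from rfl, A_coe]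
    simp only [Finset.mem_univ, if_true, hA]
    ring
  have S2 : ∑ i : Fin (n+2), ∑ j : Fin (n+2),
      (if (j:ℕ)+1 = (i:ℕ) then A l j * v j * v i else 0)
      = ∑ k : Fin (n+1), (l k ^ (-(1/2):ℝ)) * (v k.castSucc * v k.succ) := by
    rw [Fin.sum_univ_succ]
    have h0 : ∑ j : Fin (n+2),
        (if (j:ℕ)+1 = ((0 : Fin (n+2)):ℕ) then A l j * v j * v 0 else 0) = 0 := by
      apply Finset.sum_eq_zero; intro j _
      rw [if_neg (by simp)]
    rw [h0, zero_add]
    apply Finset.sum_congr rfl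
    intro k _
    have : ∀ j : Fin (n+2), ((j:ℕ)+1 = ((k.succ : Fin (n+2)):ℕ)) = (j = k.castSucc) := by
      intro j
      simp only [Fin.ext_iff, Fin.val_succ, Fin.coe_castSucc, eq_iff_iff]
      omega
    simp only [this]
    rw [Finset.sum_ite_eq' Finset.univ k.castSucc]
    have hA : A l ((k.castSucc : Fin (n+2)) : ℕ) = l k ^ (-(1/2):ℝ) := by
      rw [show ((k.castSucc : Fin (n+2)) : ℕ) = (k : ℕ) from rfl, A_coe]
    simp only [Finset.mem_univ, if_true, hA]
    ring
  rw [S1, S2, ← Finset.sum_add_distrib]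
  apply Finset.sum_congr rfl
  intro k _; ring
abbrev Ev (n : ℕ) := EuclideanSpace ℝ (Fin (n+2))

def toEv (v : Fin (n+2) → ℝ) : Ev n := WithLp.toLp 2 v

@[simp] lemma toEv_apply (v : Fin (n+2) → ℝ) (i : Fin (n+2)) : (toEv (n := n) v) i = v i := rfl

lemma toEv_ne_zero {v : Fin (n+2) → ℝ} (hv : v ≠ 0) : toEv (n := n) v ≠ 0 :=
  fun h => hv (by simpa [toEv] using congrArg WithLp.ofLp h)

noncomputable def Top (n : ℕ) (l : Fin (n+1) → ℝ) : Ev n →L[ℝ] Ev n :=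
  LinearMap.toContinuousLinearMap (Matrix.toEuclideanLin (Bmat n l))

lemma Top_apply (l : Fin (n+1) → ℝ) (x : Ev n) :
    (Top n l x : Fin (n+2) → ℝ) = (Bmat n l).mulVec x := rfl

lemma Top_isSelfAdjoint (l : Fin (n+1) → ℝ) : IsSelfAdjoint (Top n l) := by
  rw [ContinuousLinearMap.isSelfAdjoint_iff_isSymmetric]
  have : (Bmat n l).IsHermitian := by
    rw [Matrix.IsHermitian]
    simpa using Bmat_transpose l
  have h2 := Matrix.isHermitian_iff_isSymmetric.mp this
  simpa [Top] using h2

lemma normsq (x : Ev n) : ‖x‖^2 = ∑ i, x i ^ 2 := by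
  rw [← real_inner_self_eq_norm_sq]
  simp only [PiLp.inner_apply, RCLike.inner_apply, conj_trivial]
  exact Finset.sum_congr rfl (fun i _ => by ring)

lemma reApply (l : Fin (n+1) → ℝ) (x : Ev n) :
    (Top n l).reApplyInnerSelf x = (Bmat n l).mulVec x ⬝ᵥ x := by
  simp only [ContinuousLinearMap.reApplyInnerSelf, PiLp.inner_apply, RCLike.inner_apply]
  simp [dotProduct, Top_apply, mul_comm]

noncomputable def SupR (n : ℕ) (l : Fin (n+1) → ℝ) : ℝ :=
  ⨆ x : {x : Ev n // x ≠ 0}, (Top n l).rayleighQuotient x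

lemma entry_abs_le (x : Ev n) (i : Fin (n+2)) : |x i| ≤ ‖x‖ := by
  have h1 : x i ^ 2 ≤ ‖x‖ ^ 2 := by
    rw [normsq]
    exact Finset.single_le_sum (f := fun i => x i ^ 2) (fun j _ => sq_nonneg _)
      (Finset.mem_univ i)
  calc |x i| = Real.sqrt (x i ^ 2) := (Real.sqrt_sq_eq_abs _).symm
    _ ≤ Real.sqrt (‖x‖ ^ 2) := Real.sqrt_le_sqrt h1
    _ = ‖x‖ := Real.sqrt_sq (norm_nonneg _)

lemma prod_le_normsq (x : Ev n) (i j : Fin (n+2)) : x i * x j ≤ ‖x‖ ^ 2 := by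
  calc x i * x j ≤ |x i * x j| := le_abs_self _
    _ = |x i| * |x j| := abs_mul _ _
    _ ≤ ‖x‖ * ‖x‖ := mul_le_mul (entry_abs_le x i) (entry_abs_le x j) (abs_nonneg _) (norm_nonneg _)
    _ = ‖x‖ ^ 2 := (sq ‖x‖).symm

lemma rayleigh_le_of_quad_le {l : Fin (n+1) → ℝ} {c : ℝ}
    (h : ∀ v : Fin (n+2) → ℝ, (Bmat n l).mulVec v ⬝ᵥ v ≤ c * ∑ i, v i ^ 2)
    (x : {x : Ev n // x ≠ 0}) : (Top n l).rayleighQuotient x ≤ c := by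
  have hx : (0:ℝ) < ‖(x : Ev n)‖ ^ 2 := by
    have : ‖(x : Ev n)‖ ≠ 0 := norm_ne_zero_iff.mpr x.prop
    positivity
  rw [ContinuousLinearMap.rayleighQuotient, div_le_iff₀ hx, reApply]
  calc (Bmat n l).mulVec x ⬝ᵥ (x : Ev n) ≤ c * ∑ i, (x : Ev n) i ^ 2 := h _
    _ = c * ‖(x : Ev n)‖ ^ 2 := by rw [normsq]

lemma quad_bound {l : Fin (n+1) → ℝ} (hl : ∀ i, 0 < l i) (v : Fin (n+2) → ℝ) :
    (Bmat n l).mulVec v ⬝ᵥ v ≤ (∑ k : Fin (n+1), 2 * (l k ^ (-(1/2):ℝ))) * ∑ i, v i ^ 2 := by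
  rw [quadform, Finset.sum_mul]
  apply Finset.sum_le_sum
  intro k _
  have ha : 0 < l k ^ (-(1/2):ℝ) := Real.rpow_pos_of_pos (hl k) _
  have h2 : v k.castSucc * v k.succ ≤ ∑ i, v i ^ 2 := by
    have := prod_le_normsq (toEv (n := n) v) k.castSucc k.succ
    rw [normsq] at this
    simpa using this
  calc 2 * (l k ^ (-(1/2):ℝ)) * (v k.castSucc * v k.succ)
      ≤ 2 * (l k ^ (-(1/2):ℝ)) * ∑ i, v i ^ 2 := by
        apply mul_le_mul_of_nonneg_left h2; positivity
    _ = _ := by rfl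

lemma rayleigh_bddAbove {l : Fin (n+1) → ℝ} (hl : ∀ i, 0 < l i) :
    BddAbove (Set.range fun x : {x : Ev n // x ≠ 0} => (Top n l).rayleighQuotient x) := by
  refine ⟨∑ k : Fin (n+1), 2 * (l k ^ (-(1/2):ℝ)), ?_⟩
  rintro y ⟨x, rfl⟩
  exact rayleigh_le_of_quad_le (quad_bound hl) x

lemma rayleigh_eig {l : Fin (n+1) → ℝ} {μ : ℝ} {v : Fin (n+2) → ℝ} (hv : v ≠ 0)
    (h : (Bmat n l).mulVec v = μ • v) :
    (Top n l).rayleighQuotient (toEv (n := n) v) = μ := by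
  have hvE : toEv (n := n) v ≠ 0 := toEv_ne_zero hv
  have hn : ‖toEv (n := n) v‖ ≠ 0 := norm_ne_zero_iff.mpr hvE
  have hs : (0:ℝ) < ‖toEv (n := n) v‖ ^ 2 := by positivity
  have hQ : (Bmat n l).mulVec v ⬝ᵥ v = μ * ‖toEv (n := n) v‖ ^ 2 := by
    rw [h, normsq]
    simp only [dotProduct, Pi.smul_apply, smul_eq_mul, Finset.mul_sum, toEv_apply]
    apply Finset.sum_congr rfl; intro i _; ring
  rw [ContinuousLinearMap.rayleighQuotient, reApply]
  rw [show (Bmat n l).mulVec (toEv (n := n) v) ⬝ᵥ (toEv (n := n) v)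
      = (Bmat n l).mulVec v ⬝ᵥ v from rfl, hQ]
  field_simp

lemma sigmaB_eq_sup {l : Fin (n+1) → ℝ} (hl : ∀ i, 0 < l i) :
    sigmaB n l = SupR n l := by
  have hsym : (Matrix.toEuclideanLin (Bmat n l)).IsSymmetric := by
    have := Top_isSelfAdjoint (n := n) l
    rw [ContinuousLinearMap.isSelfAdjoint_iff_isSymmetric] at this
    simpa [Top] using this
  have hEig : Module.End.HasEigenvalue (Matrix.toEuclideanLin (Bmat n l)) (SupR n l) := by
    have := hsym.hasEigenvalue_iSup_of_finiteDimensional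
    exact this
  have hmem : SupR n l ∈ {μ : ℝ | ∃ v : Fin (n+2) → ℝ, v ≠ 0 ∧ (Bmat n l).mulVec v = μ • v} := by
    obtain ⟨v, hv⟩ := hEig.exists_hasEigenvector
    refine ⟨v, fun h => hv.right (by simpa using congrArg (WithLp.toLp 2) h), ?_⟩
    exact congrArg WithLp.ofLp (Module.End.mem_eigenspace_iff.mp hv.left)
  have hub : ∀ μ ∈ {μ : ℝ | ∃ v : Fin (n+2) → ℝ, v ≠ 0 ∧ (Bmat n l).mulVec v = μ • v},
      μ ≤ SupR n l := by
    rintro μ ⟨v, hv, hμ⟩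
    rw [← rayleigh_eig (l := l) hv hμ]
    exact le_ciSup (rayleigh_bddAbove hl) (⟨toEv v, toEv_ne_zero hv⟩ : {x : Ev n // x ≠ 0})
  exact IsGreatest.csSup_eq ⟨hmem, hub⟩

instance : Nonempty {x : Ev n // x ≠ 0} := ⟨⟨toEv (fun _ => 1), by
  intro h
  exact one_ne_zero (congr_fun (congrArg (fun (x : Ev n) => (x : Fin (n+2) → ℝ)) h) 0)⟩⟩

lemma sigma_le_of_quad_le {l : Fin (n+1) → ℝ} (hl : ∀ i, 0 < l i) {c : ℝ}
    (h : ∀ v : Fin (n+2) → ℝ, (Bmat n l).mulVec v ⬝ᵥ v ≤ c * ∑ i, v i ^ 2) :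
    sigmaB n l ≤ c := by
  rw [sigmaB_eq_sup hl]
  exact ciSup_le (rayleigh_le_of_quad_le h)

lemma quad_le_sigma {l : Fin (n+1) → ℝ} (hl : ∀ i, 0 < l i) (v : Fin (n+2) → ℝ) :
    (Bmat n l).mulVec v ⬝ᵥ v ≤ sigmaB n l * ∑ i, v i ^ 2 := by
  by_cases hv : v = 0
  · simp [hv, Matrix.mulVec_zero]
  have hs : (0:ℝ) < ∑ i, v i ^ 2 := by
    have h2 : (0:ℝ) < ‖toEv (n := n) v‖ ^ 2 := by
      have : ‖toEv (n := n) v‖ ≠ 0 := norm_ne_zero_iff.mpr (toEv_ne_zero hv)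
      positivity
    rw [normsq] at h2; simpa using h2
  have hr : (Top n l).rayleighQuotient (toEv (n := n) v) ≤ SupR n l :=
    le_ciSup (rayleigh_bddAbove hl) (⟨toEv v, toEv_ne_zero hv⟩ : {x : Ev n // x ≠ 0})
  rw [ContinuousLinearMap.rayleighQuotient, reApply] at hr
  rw [show (Bmat n l).mulVec (toEv (n := n) v) ⬝ᵥ (toEv (n := n) v)
      = (Bmat n l).mulVec v ⬝ᵥ v from rfl] at hr
  rw [normsq] at hr
  rw [show (∑ i, (toEv (n := n) v) i ^ 2) = ∑ i, v i ^ 2 from rfl] at hr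
  rw [div_le_iff₀ hs] at hr
  rw [sigmaB_eq_sup hl]
  linarith [hr]

lemma sigma_pos {l : Fin (n+1) → ℝ} (hl : ∀ i, 0 < l i) : 0 < sigmaB n l := by
  have h := quad_le_sigma hl (fun _ => 1)
  rw [quadform] at h
  have hQ : (0:ℝ) < ∑ k : Fin (n+1), 2 * (l k ^ (-(1/2):ℝ)) * ((1:ℝ) * 1) := by
    apply Finset.sum_pos
    · intro k _
      have := Real.rpow_pos_of_pos (hl k) (-(1/2):ℝ)
      positivity
    · exact Finset.univ_nonempty
  have hS : (∑ _i : Fin (n+2), (1:ℝ) ^ 2) = (n+2 : ℝ) := by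
    simp
  rw [hS] at h
  nlinarith [h, hQ]

lemma row_ge {l : Fin (n+1) → ℝ} (hl : ∀ i, 0 < l i) {v : Fin (n+2) → ℝ}
    (hv0 : ∀ i, 0 ≤ v i) (i j : Fin (n+2)) :
    Bmat n l i j * v j ≤ (Bmat n l).mulVec v i := by
  rw [Matrix.mulVec]
  exact Finset.single_le_sum (f := fun j => Bmat n l i j * v j)
    (fun j _ => mul_nonneg (Bmat_nonneg hl _ _) (hv0 j)) (Finset.mem_univ j)

lemma pos_of_eig {l : Fin (n+1) → ℝ} (hl : ∀ i, 0 < l i) {σ : ℝ} (hσ : 0 < σ)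
    {v : Fin (n+2) → ℝ} (hv0 : ∀ i, 0 ≤ v i) (hv1 : (∑ i, v i ^ 2) = 1)
    (heq : (Bmat n l).mulVec v = σ • v) : ∀ i, 0 < v i := by
  have hrow : ∀ i j : Fin (n+2), Bmat n l i j * v j ≤ σ * v i := by
    intro i j
    have := row_ge hl hv0 i j
    rwa [heq] at this
  have step_up : ∀ k : Fin (n+1), v k.castSucc = 0 → v k.succ = 0 := by
    intro k hk
    have h := hrow k.castSucc k.succ
    rw [Bmat_castSucc_succ, hk, mul_zero] at h
    have ha : 0 < l k ^ (-(1/2):ℝ) := Real.rpow_pos_of_pos (hl k) _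
    nlinarith [hv0 k.succ]
  have step_down : ∀ k : Fin (n+1), v k.succ = 0 → v k.castSucc = 0 := by
    intro k hk
    have h := hrow k.succ k.castSucc
    rw [Bmat_succ_castSucc, hk, mul_zero] at h
    have ha : 0 < l k ^ (-(1/2):ℝ) := Real.rpow_pos_of_pos (hl k) _
    nlinarith [hv0 k.castSucc]
  -- extended function
  set u : ℕ → ℝ := fun m => if h : m < n+2 then v ⟨m, h⟩ else 0 with hu
  have hcs : ∀ (m : ℕ) (h : m < n+1), ((⟨m, h⟩ : Fin (n+1)).castSucc : Fin (n+2)) = ⟨m, by omega⟩ := by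
    intro m h; apply Fin.ext; simp
  have hsc : ∀ (m : ℕ) (h : m < n+1), ((⟨m, h⟩ : Fin (n+1)).succ : Fin (n+2)) = ⟨m+1, by omega⟩ := by
    intro m h; apply Fin.ext; simp
  have hup : ∀ m : ℕ, u m = 0 → u (m+1) = 0 := by
    intro m hm
    by_cases h : m + 1 < n + 2
    · have hm' : m < n + 1 := by omega
      have h1 : u m = v ((⟨m, hm'⟩ : Fin (n+1)).castSucc) := by
        rw [hu]; simp only [dif_pos (show m < n+2 by omega)]; rw [hcs m hm']
      have h2 : u (m+1) = v ((⟨m, hm'⟩ : Fin (n+1)).succ) := by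
        rw [hu]; simp only [dif_pos h]; rw [hsc m hm']
      rw [h2]; exact step_up _ (by rw [← h1]; exact hm)
    · show (if h : m + 1 < n + 2 then v ⟨m+1, h⟩ else 0) = 0
      rw [dif_neg h]
  have hdown : ∀ m : ℕ, m + 1 < n + 2 → u (m+1) = 0 → u m = 0 := by
    intro m h hm
    have hm' : m < n + 1 := by omega
    have h1 : u m = v ((⟨m, hm'⟩ : Fin (n+1)).castSucc) := by
      rw [hu]; simp only [dif_pos (show m < n+2 by omega)]; rw [hcs m hm']
    have h2 : u (m+1) = v ((⟨m, hm'⟩ : Fin (n+1)).succ) := by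
      rw [hu]; simp only [dif_pos h]; rw [hsc m hm']
    rw [h1]; exact step_down _ (by rw [← h2]; exact hm)
  -- main claim: all entries nonzero
  intro i
  rcases lt_or_eq_of_le (hv0 i) with h | h
  · exact h
  exfalso
  have hu_i : u (i : ℕ) = 0 := by
    rw [hu]; simp only [dif_pos i.isLt]
    rw [show (⟨(i:ℕ), i.isLt⟩ : Fin (n+2)) = i from Fin.ext rfl]
    exact h.symm
  have hzero_down : ∀ j : ℕ, j ≤ (i:ℕ) → u ((i:ℕ) - j) = 0 := by
    intro j
    induction j with
    | zero => intro _; simpa using hu_i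
    | succ j ih =>
      intro hj
      have hj' : j ≤ (i:ℕ) := by omega
      have h1 := ih hj'
      have he : (i:ℕ) - j = ((i:ℕ) - (j+1)) + 1 := by omega
      apply hdown
      · have := i.isLt; omega
      · rw [← he]; exact h1
  have h0 : u 0 = 0 := by
    have := hzero_down (i:ℕ) le_rfl
    simpa using this
  have hall : ∀ m : ℕ, u m = 0 := by
    intro m; induction m with
    | zero => exact h0
    | succ m ih => exact hup m ih
  have hvz : ∀ j : Fin (n+2), v j = 0 := by
    intro j
    have := hall (j : ℕ)
    rw [hu] at this; simp only [dif_pos j.isLt] at this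
    rwa [show (⟨(j:ℕ), j.isLt⟩ : Fin (n+2)) = j from Fin.ext rfl] at this
  rw [Finset.sum_eq_zero (fun j _ => by rw [hvz j]; ring)] at hv1
  exact zero_ne_one hv1

lemma exists_perron {l : Fin (n+1) → ℝ} (hl : ∀ i, 0 < l i) :
    ∃ v : Fin (n+2) → ℝ, (∀ i, 0 < v i) ∧ (∑ i, v i ^ 2) = 1 ∧
      (Bmat n l).mulVec v = sigmaB n l • v := by
  -- a point on the unit sphere
  have H₁ : IsCompact (Metric.sphere (0 : Ev n) 1) := isCompact_sphere _ _
  have H₂ : (Metric.sphere (0 : Ev n) 1).Nonempty := by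
    refine ⟨toEv (EuclideanSpace.single 0 (1:ℝ)), ?_⟩
    rw [mem_sphere_zero_iff_norm]
    rw [show toEv (n := n) (EuclideanSpace.single 0 (1:ℝ)) = EuclideanSpace.single 0 (1:ℝ) from rfl]
    simp
  obtain ⟨x₀, hx₀mem, hmax⟩ := H₁.exists_isMaxOn H₂
    (Top n l).reApplyInnerSelf_continuous.continuousOn
  have hx₀norm : ‖x₀‖ = 1 := mem_sphere_zero_iff_norm.mp hx₀mem
  set w : Ev n := toEv (fun i => |x₀ i|) with hw
  have hwi : ∀ i, w i = |x₀ i| := fun i => rfl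
  have hwnormsq : ‖w‖^2 = 1 := by
    rw [normsq]
    have : ∑ i, w i ^ 2 = ∑ i, x₀ i ^ 2 := by
      apply Finset.sum_congr rfl; intro i _; rw [hwi, sq_abs]
    rw [this, ← normsq, hx₀norm]; norm_num
  have hwnorm : ‖w‖ = 1 := by
    have hn := norm_nonneg w
    nlinarith
  have hw0 : w ≠ 0 := by
    intro h; rw [h, norm_zero] at hwnorm; exact zero_ne_one hwnorm
  have hQmono : (Top n l).reApplyInnerSelf x₀ ≤ (Top n l).reApplyInnerSelf w := by
    rw [reApply, reApply]
    rw [show (Bmat n l).mulVec w ⬝ᵥ (w : Ev n) = (Bmat n l).mulVec (fun i => |x₀ i|) ⬝ᵥ (fun i => |x₀ i|) from rfl]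
    rw [show (Bmat n l).mulVec x₀ ⬝ᵥ (x₀ : Ev n) = (Bmat n l).mulVec (fun i => x₀ i) ⬝ᵥ (fun i => x₀ i) from rfl]
    rw [quadform, quadform]
    apply Finset.sum_le_sum
    intro k _
    have ha : (0:ℝ) ≤ l k ^ (-(1/2):ℝ) := (Real.rpow_pos_of_pos (hl k) _).le
    have : x₀ k.castSucc * x₀ k.succ ≤ |x₀ k.castSucc| * |x₀ k.succ| := by
      calc x₀ k.castSucc * x₀ k.succ ≤ |x₀ k.castSucc * x₀ k.succ| := le_abs_self _
        _ = |x₀ k.castSucc| * |x₀ k.succ| := abs_mul _ _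
    nlinarith
  have hmax' : IsMaxOn (Top n l).reApplyInnerSelf (Metric.sphere (0 : Ev n) ‖w‖) w := by
    rw [hwnorm]
    intro y hy
    exact le_trans (hmax hy) hQmono
  have hEig := (Top_isSelfAdjoint l).hasEigenvector_of_isMaxOn hw0 hmax'
  have heq : (Bmat n l).mulVec w = (SupR n l) • (w : Fin (n+2) → ℝ) := by
    have h1 := Module.End.mem_eigenspace_iff.mp hEig.1
    exact congrArg WithLp.ofLp h1
  have hσ : sigmaB n l = SupR n l := sigmaB_eq_sup hl
  have heq' : (Bmat n l).mulVec w = sigmaB n l • (w : Fin (n+2) → ℝ) := by rw [hσ]; exact heq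
  have hsum1 : (∑ i, (w : Fin (n+2) → ℝ) i ^ 2) = 1 := by
    rw [← normsq]; nlinarith
  have hpos : ∀ i, 0 < (w : Fin (n+2) → ℝ) i := by
    apply pos_of_eig hl (sigma_pos hl) (fun i => by rw [hwi]; exact abs_nonneg _) hsum1
    exact heq'
  exact ⟨w, hpos, hsum1, heq'⟩

lemma sigma_ge_inv_sqrt {l : Fin (n+1) → ℝ} (hl : ∀ i, 0 < l i) (k : Fin (n+1)) :
    l k ^ (-(1/2):ℝ) ≤ sigmaB n l := by
  set v : Fin (n+2) → ℝ := fun i => if ((i:ℕ) = (k:ℕ) ∨ (i:ℕ) = (k:ℕ)+1) then 1 else 0 with hv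
  have hsplit : ∀ i : Fin (n+2), v i = (if i = k.castSucc then 1 else 0) + (if i = k.succ then 1 else 0) := by
    intro i
    rw [hv]
    simp only [Fin.ext_iff, Fin.coe_castSucc, Fin.val_succ]
    split_ifs <;> first | omega | norm_num
  have hsq : ∀ i, v i ^ 2 = v i := by
    intro i; simp only [hv]; split_ifs <;> norm_num
  have hsum : (∑ i, v i ^ 2) = 2 := by
    have e1 : (∑ i, v i ^ 2) = ∑ i, v i := Finset.sum_congr rfl (fun i _ => hsq i)
    have e2 : (∑ i, v i) = ∑ i, ((if i = k.castSucc then (1:ℝ) else 0)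
        + (if i = k.succ then 1 else 0)) := Finset.sum_congr rfl (fun i _ => hsplit i)
    rw [e1, e2, Finset.sum_add_distrib, Finset.sum_ite_eq' Finset.univ k.castSucc,
      Finset.sum_ite_eq' Finset.univ k.succ]
    norm_num
  have hQ : (Bmat n l).mulVec v ⬝ᵥ v = 2 * (l k ^ (-(1/2):ℝ)) := by
    rw [quadform]
    rw [Finset.sum_eq_single k]
    · have h1 : v k.castSucc = 1 := by
        simp only [hv, Fin.coe_castSucc]; norm_num
      have h2 : v k.succ = 1 := by
        simp only [hv, Fin.val_succ]; norm_num
      rw [h1, h2]; ring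
    · intro j _ hj
      have hjk : (j:ℕ) ≠ (k:ℕ) := fun h => hj (Fin.ext h)
      have h0 : v j.castSucc * v j.succ = 0 := by
        simp only [hv, Fin.coe_castSucc, Fin.val_succ]
        split_ifs <;> first | omega | norm_num
      rw [h0]; ring
    · intro h; exact absurd (Finset.mem_univ k) h
  have := quad_le_sigma hl v
  rw [hQ, hsum] at this
  linarith

lemma sigma_const_one_le_two : sigmaB n (fun _ => 1) ≤ 2 := by
  apply sigma_le_of_quad_le (fun _ => one_pos)
  intro v
  rw [quadform]
  have h1 : ∀ k : Fin (n+1), 2 * ((1:ℝ) ^ (-(1/2):ℝ)) * (v k.castSucc * v k.succ)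
      ≤ v k.castSucc ^ 2 + v k.succ ^ 2 := by
    intro k
    rw [Real.one_rpow]
    nlinarith [sq_nonneg (v k.castSucc - v k.succ)]
  calc ∑ k : Fin (n+1), 2 * ((1:ℝ) ^ (-(1/2):ℝ)) * (v k.castSucc * v k.succ)
      ≤ ∑ k : Fin (n+1), (v k.castSucc ^ 2 + v k.succ ^ 2) := Finset.sum_le_sum (fun k _ => h1 k)
    _ = (∑ k : Fin (n+1), v k.castSucc ^ 2) + ∑ k : Fin (n+1), v k.succ ^ 2 :=
        Finset.sum_add_distrib
    _ ≤ (∑ i, v i ^ 2) + ∑ i, v i ^ 2 := by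
        apply add_le_add
        · rw [Fin.sum_univ_castSucc (f := fun i => v i ^ 2)]
          nlinarith [sq_nonneg (v (Fin.last (n+1)))]
        · rw [Fin.sum_univ_succ (f := fun i => v i ^ 2)]
          nlinarith [sq_nonneg (v 0)]
    _ = 2 * ∑ i, v i ^ 2 := by ring

lemma sigma_smul_le {l : Fin (n+1) → ℝ} (hl : ∀ i, 0 < l i) {t : ℝ} (ht : 0 < t) :
    sigmaB n (fun i => t * l i) ≤ t ^ (-(1/2):ℝ) * sigmaB n l := by
  have htp : 0 < t ^ (-(1/2):ℝ) := Real.rpow_pos_of_pos ht _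
  apply sigma_le_of_quad_le (fun i => mul_pos ht (hl i))
  intro v
  rw [quadform]
  have hrw : ∀ k : Fin (n+1), (t * l k) ^ (-(1/2):ℝ) = t ^ (-(1/2):ℝ) * l k ^ (-(1/2):ℝ) :=
    fun k => Real.mul_rpow ht.le (hl k).le
  calc ∑ k : Fin (n+1), 2 * ((t * l k) ^ (-(1/2):ℝ)) * (v k.castSucc * v k.succ)
      = t ^ (-(1/2):ℝ) * ∑ k : Fin (n+1), 2 * (l k ^ (-(1/2):ℝ)) * (v k.castSucc * v k.succ) := by
        rw [Finset.mul_sum]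
        apply Finset.sum_congr rfl
        intro k _; rw [hrw k]; ring
    _ = t ^ (-(1/2):ℝ) * ((Bmat n l).mulVec v ⬝ᵥ v) := by rw [quadform]
    _ ≤ t ^ (-(1/2):ℝ) * (sigmaB n l * ∑ i, v i ^ 2) :=
        mul_le_mul_of_nonneg_left (quad_le_sigma hl v) htp.le
    _ = t ^ (-(1/2):ℝ) * sigmaB n l * ∑ i, v i ^ 2 := by ring

lemma abs_prod_le_sumsq (v : Fin (n+2) → ℝ) (i j : Fin (n+2)) :
    |v i * v j| ≤ ∑ a, v a ^ 2 := by
  have h1 := entry_abs_le (toEv (n := n) v) i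
  have h2 := entry_abs_le (toEv (n := n) v) j
  have hn0 := norm_nonneg (toEv (n := n) v)
  have h3 : ‖toEv (n := n) v‖ ^ 2 = ∑ a, v a ^ 2 := by
    rw [normsq]
    exact Finset.sum_congr rfl (fun a _ => rfl)
  rw [abs_mul]
  calc |v i| * |v j| ≤ ‖toEv (n := n) v‖ * ‖toEv (n := n) v‖ :=
        mul_le_mul h1 h2 (abs_nonneg _) hn0
    _ = ‖toEv (n := n) v‖ ^ 2 := (sq _).symm
    _ = _ := h3

lemma sigma_diff_le {l m : Fin (n+1) → ℝ} (hl : ∀ i, 0 < l i) (hm : ∀ i, 0 < m i) :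
    sigmaB n l ≤ sigmaB n m
      + ∑ k : Fin (n+1), 2 * |l k ^ (-(1/2):ℝ) - m k ^ (-(1/2):ℝ)| := by
  apply sigma_le_of_quad_le hl
  intro v
  rw [quadform]
  have key : ∀ k : Fin (n+1), 2 * (l k ^ (-(1/2):ℝ)) * (v k.castSucc * v k.succ)
      ≤ 2 * (m k ^ (-(1/2):ℝ)) * (v k.castSucc * v k.succ)
        + 2 * |l k ^ (-(1/2):ℝ) - m k ^ (-(1/2):ℝ)| * ∑ a, v a ^ 2 := by
    intro k
    have h1 : (l k ^ (-(1/2):ℝ) - m k ^ (-(1/2):ℝ)) * (v k.castSucc * v k.succ)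
        ≤ |l k ^ (-(1/2):ℝ) - m k ^ (-(1/2):ℝ)| * ∑ a, v a ^ 2 := by
      calc (l k ^ (-(1/2):ℝ) - m k ^ (-(1/2):ℝ)) * (v k.castSucc * v k.succ)
          ≤ |(l k ^ (-(1/2):ℝ) - m k ^ (-(1/2):ℝ)) * (v k.castSucc * v k.succ)| := le_abs_self _
        _ = |l k ^ (-(1/2):ℝ) - m k ^ (-(1/2):ℝ)| * |v k.castSucc * v k.succ| := abs_mul _ _
        _ ≤ |l k ^ (-(1/2):ℝ) - m k ^ (-(1/2):ℝ)| * ∑ a, v a ^ 2 :=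
            mul_le_mul_of_nonneg_left (abs_prod_le_sumsq v _ _) (abs_nonneg _)
    nlinarith [h1]
  calc ∑ k : Fin (n+1), 2 * (l k ^ (-(1/2):ℝ)) * (v k.castSucc * v k.succ)
      ≤ ∑ k : Fin (n+1), (2 * (m k ^ (-(1/2):ℝ)) * (v k.castSucc * v k.succ)
          + 2 * |l k ^ (-(1/2):ℝ) - m k ^ (-(1/2):ℝ)| * ∑ a, v a ^ 2) :=
        Finset.sum_le_sum (fun k _ => key k)
    _ = ((Bmat n m).mulVec v ⬝ᵥ v)
          + (∑ k : Fin (n+1), 2 * |l k ^ (-(1/2):ℝ) - m k ^ (-(1/2):ℝ)|) * ∑ a, v a ^ 2 := by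
        rw [Finset.sum_add_distrib, quadform, Finset.sum_mul]
    _ ≤ sigmaB n m * (∑ a, v a ^ 2)
          + (∑ k : Fin (n+1), 2 * |l k ^ (-(1/2):ℝ) - m k ^ (-(1/2):ℝ)|) * ∑ a, v a ^ 2 := by
        have := quad_le_sigma hm v
        linarith
    _ = (sigmaB n m + ∑ k : Fin (n+1), 2 * |l k ^ (-(1/2):ℝ) - m k ^ (-(1/2):ℝ)|) * ∑ a, v a ^ 2 := by
        ring

lemma sigma_continuousAt {m : Fin (n+1) → ℝ} (hm : ∀ i, 0 < m i) :
    ContinuousAt (sigmaB n) m := by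
  set D : (Fin (n+1) → ℝ) → ℝ :=
    fun l => ∑ k : Fin (n+1), 2 * |l k ^ (-(1/2):ℝ) - m k ^ (-(1/2):ℝ)| with hD
  have hU : ∀ᶠ l in nhds m, ∀ i, 0 < l i := by
    have : {l : Fin (n+1) → ℝ | ∀ i, 0 < l i} ∈ nhds m := by
      have hopen : IsOpen {l : Fin (n+1) → ℝ | ∀ i, 0 < l i} := by
        have : {l : Fin (n+1) → ℝ | ∀ i, 0 < l i} = ⋂ i, {l | 0 < l i} := by
          ext l; simp
        rw [this]
        exact isOpen_iInter_of_finite (fun i => isOpen_lt continuous_const (continuous_apply i))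
      exact hopen.mem_nhds (by exact hm)
    exact this
  have hbound : ∀ᶠ l in nhds m, |sigmaB n l - sigmaB n m| ≤ D l := by
    filter_upwards [hU] with l hl
    have h1 := sigma_diff_le hl hm
    have h2 := sigma_diff_le hm hl
    have h3 : (∑ k : Fin (n+1), 2 * |m k ^ (-(1/2):ℝ) - l k ^ (-(1/2):ℝ)|) = D l := by
      rw [hD]; apply Finset.sum_congr rfl; intro k _; rw [abs_sub_comm]
    rw [h3] at h2
    rw [abs_le]; constructor <;> [linarith; linarith]
  have hDcont : Filter.Tendsto D (nhds m) (nhds 0) := by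
    have hD0 : D m = 0 := by
      simp only [hD]; apply Finset.sum_eq_zero; intro k _; simp
    have hc : ∀ k : Fin (n+1), ContinuousAt
        (fun l : Fin (n+1) → ℝ => 2 * |l k ^ (-(1/2):ℝ) - m k ^ (-(1/2):ℝ)|) m := by
      intro k
      have h1 : ContinuousAt (fun l : Fin (n+1) → ℝ => l k ^ (-(1/2):ℝ)) m :=
        ContinuousAt.rpow_const (continuous_apply k).continuousAt (Or.inl (hm k).ne')
      exact continuousAt_const.mul ((h1.sub continuousAt_const).abs)
    have hcD : Filter.Tendsto D (nhds m) (nhds (D m)) := by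
      simp only [hD]
      exact tendsto_finset_sum _ (fun k _ => hc k)
    rw [← hD0]; exact hcD
  have hb2 : ∀ᶠ l in nhds m, dist (sigmaB n l) (sigmaB n m) ≤ D l := by
    filter_upwards [hbound] with l h
    rw [Real.dist_eq]; exact h
  rw [ContinuousAt, tendsto_iff_dist_tendsto_zero]
  exact squeeze_zero' (Filter.Eventually.of_forall (fun l => dist_nonneg)) hb2 hDcont

lemma sq_rpow_neg_half {x : ℝ} (hx : 0 < x) : (x ^ (-(1/2):ℝ))^2 * x = 1 := by
  have h1 : (x ^ (-(1/2):ℝ))^2 = x ^ (-1:ℝ) := by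
    rw [← Real.rpow_natCast (x ^ (-(1/2):ℝ)) 2, ← Real.rpow_mul hx.le]
    norm_num
  rw [h1, Real.rpow_neg_one]
  field_simp

lemma midpoint_rpow_lt {x y : ℝ} (hx : 0 < x) (hy : 0 < y) (hxy : x ≠ y) :
    ((x+y)/2) ^ (-(1/2):ℝ) < (x ^ (-(1/2):ℝ) + y ^ (-(1/2):ℝ))/2 := by
  set a := x ^ (-(1/2):ℝ) with ha
  set b := y ^ (-(1/2):ℝ) with hb
  set c := ((x+y)/2) ^ (-(1/2):ℝ) with hc
  have hap : 0 < a := Real.rpow_pos_of_pos hx _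
  have hbp : 0 < b := Real.rpow_pos_of_pos hy _
  have hcp : 0 < c := Real.rpow_pos_of_pos (by linarith) _
  have ha2 : a^2 * x = 1 := sq_rpow_neg_half hx
  have hb2 : b^2 * y = 1 := sq_rpow_neg_half hy
  have hc2 : c^2 * ((x+y)/2) = 1 := sq_rpow_neg_half (by linarith)
  have hq2 : (a*b)^2 * (x*y) = 1 := by
    calc (a*b)^2 * (x*y) = (a^2*x) * (b^2*y) := by ring
      _ = 1 := by rw [ha2, hb2]; ring
  have hxy4 : 4*(x*y) < (x+y)^2 := by
    have h := sub_ne_zero.mpr hxy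
    have : 0 < (x-y)^2 := by positivity
    nlinarith
  have hr : 2 < a*b*(x+y) := by
    have h1 : 0 < a*b*(x+y) := by positivity
    have habp : 0 < (a*b)^2 := by positivity
    have h2 : (a*b*(x+y))^2 > 4 := by
      have h3 := mul_lt_mul_of_pos_left hxy4 habp
      nlinarith [h3, hq2]
    nlinarith
  -- a^2*y + b^2*x ≥ 2 by AM-GM since product = 1
  have hamgm : 2 ≤ a^2*y + b^2*x := by
    have hprod : (a^2*y) * (b^2*x) = 1 := by
      calc (a^2*y) * (b^2*x) = (a*b)^2 * (x*y) := by ring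
        _ = 1 := hq2
    have hu : 0 < a^2*y := by positivity
    nlinarith [sq_nonneg (a^2*y - 1)]
  -- (a+b)^2*(x+y) > 8 = 4*c^2*(x+y)
  have hkey : 4*c^2*(x+y) < (a+b)^2 * (x+y) := by
    have e1 : (a+b)^2*(x+y) = a^2*x + b^2*y + (a^2*y + b^2*x) + 2*(a*b*(x+y)) := by ring
    have e2 : 4*c^2*(x+y) = 8 := by nlinarith [hc2]
    rw [e1, e2, ha2, hb2]
    linarith
  have hxyp : 0 < x + y := by linarith
  have h4 : 4*c^2 < (a+b)^2 := by nlinarith [hkey, hxyp]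
  nlinarith [h4, hap, hbp, hcp]

lemma midpoint_rpow_le {x y : ℝ} (hx : 0 < x) (hy : 0 < y) :
    ((x+y)/2) ^ (-(1/2):ℝ) ≤ (x ^ (-(1/2):ℝ) + y ^ (-(1/2):ℝ))/2 := by
  by_cases h : x = y
  · subst h
    rw [show (x+x)/2 = x by ring]
    rw [show (x ^ (-(1/2):ℝ) + x ^ (-(1/2):ℝ))/2 = x ^ (-(1/2):ℝ) by ring]
  · exact (midpoint_rpow_lt hx hy h).le

lemma h19 : ((1:ℝ)/9) ^ (-(1/2):ℝ) = 3 := by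
  rw [show ((1:ℝ)/9) = 9⁻¹ by norm_num, ← Real.rpow_neg_one (9:ℝ),
    ← Real.rpow_mul (by norm_num : (0:ℝ) ≤ 9)]
  rw [show ((-1:ℝ) * -(1/2)) = (1/2:ℝ) by norm_num]
  rw [show (9:ℝ) = 3^(2:ℕ) by norm_num, ← Real.rpow_natCast (3:ℝ) 2,
    ← Real.rpow_mul (by norm_num : (0:ℝ) ≤ 3)]
  norm_num

lemma feasible_sum_le {l : Fin (n+1) → ℝ} (h : Feasible n l) : (∑ i, l i) ≤ (n:ℝ)+1 := by
  have hpos : (0:ℝ) < (n:ℝ)+1 := by positivity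
  have h2 := h.2
  rwa [div_le_one hpos] at h2

lemma exists_minimizer : ∃ l : Fin (n+1) → ℝ, IsMinimizer n l := by
  classical
  set K : Set (Fin (n+1) → ℝ) :=
    (Set.univ.pi fun _ : Fin (n+1) => Set.Icc (1/9 : ℝ) ((n:ℝ)+1)) ∩
      {l | (∑ i, l i) ≤ (n:ℝ)+1} with hK
  have hKc : IsCompact K := by
    apply IsCompact.inter_right
    · exact isCompact_univ_pi (fun _ => isCompact_Icc)
    · exact isClosed_le (by exact continuous_finset_sum _ (fun i _ => continuous_apply i))
        continuous_const
  have hone : (fun _ => (1:ℝ)) ∈ K := by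
    constructor
    · intro i _
      simp only [Set.mem_Icc]
      refine ⟨by norm_num, ?_⟩
      have h0 : (0:ℝ) ≤ (n:ℝ) := Nat.cast_nonneg n
      linarith
    · show (∑ _i : Fin (n+1), (1:ℝ)) ≤ (n:ℝ)+1
      rw [Finset.sum_const, Finset.card_univ, Fintype.card_fin]
      simp
  have hKpos : ∀ l ∈ K, ∀ i, 0 < l i := fun l hl i =>
    lt_of_lt_of_le (by norm_num) (hl.1 i (Set.mem_univ i)).1
  have hcont : ContinuousOn (sigmaB n) K :=
    fun l hl => (sigma_continuousAt (hKpos l hl)).continuousWithinAt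
  obtain ⟨lb, hlbK, hmin⟩ := hKc.exists_isMinOn ⟨_, hone⟩ hcont
  refine ⟨lb, ⟨⟨hKpos lb hlbK, ?_⟩, ?_⟩⟩
  · rw [div_le_one (by positivity)]
    exact hlbK.2
  · intro m hm
    have hmpos := hm.1
    have hmsum := feasible_sum_le hm
    by_cases hc : ∀ i, (1/9:ℝ) ≤ m i
    · have hmK : m ∈ K := by
        constructor
        · intro i _
          simp only [Set.mem_Icc]
          refine ⟨hc i, ?_⟩
          have h1 : m i ≤ ∑ j, m j :=
            Finset.single_le_sum (fun j _ => (hmpos j).le) (Finset.mem_univ i)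
          linarith
        · exact hmsum
      exact hmin hmK
    · push_neg at hc
      obtain ⟨i, hi⟩ := hc
      have h3le : (3:ℝ) ≤ m i ^ (-(1/2):ℝ) := by
        rw [← h19]
        exact Real.rpow_le_rpow_of_nonpos (hmpos i) hi.le (by norm_num)
      have h5 := sigma_ge_inv_sqrt hmpos i
      have h6 : sigmaB n lb ≤ sigmaB n (fun _ => 1) := hmin hone
      have h7 := sigma_const_one_le_two (n := n)
      linarith

lemma minimizer_sum_eq {l : Fin (n+1) → ℝ} (h : IsMinimizer n l) :
    (∑ i, l i) / ((n:ℝ)+1) = 1 := by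
  have hl := h.1.1
  have hnp : (0:ℝ) < (n:ℝ)+1 := by positivity
  have hsum := feasible_sum_le h.1
  have hS : 0 < ∑ i, l i := Finset.sum_pos (fun i _ => hl i) Finset.univ_nonempty
  rcases lt_or_eq_of_le hsum with hlt | heqs
  · exfalso
    set t := ((n:ℝ)+1) / (∑ i, l i) with htdef
    have ht1 : 1 < t := (one_lt_div hS).mpr hlt
    have htpos : 0 < t := lt_trans one_pos ht1
    have hmfeas : Feasible n (fun i => t * l i) := by
      constructor
      · intro i; exact mul_pos htpos (hl i)
      · have he : (∑ i, t * l i) = (n:ℝ)+1 := by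
          rw [← Finset.mul_sum, htdef, div_mul_cancel₀]
          exact ne_of_gt hS
        rw [he, div_self (ne_of_gt hnp)]
    have h1 := h.2 _ hmfeas
    have h2 := sigma_smul_le hl htpos
    have h3 : t ^ (-(1/2):ℝ) < 1 := Real.rpow_lt_one_of_one_lt_of_neg ht1 (by norm_num)
    have h4 := sigma_pos hl
    nlinarith [h1, h2, h3, h4]
  · rw [heqs, div_self (ne_of_gt hnp)]

lemma minimizer_unique {l m : Fin (n+1) → ℝ} (hL : IsMinimizer n l) (hM : IsMinimizer n m) :
    l = m := by
  by_contra hne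
  obtain ⟨k₀, hk₀⟩ := Function.ne_iff.mp hne
  have hlp := hL.1.1
  have hmp := hM.1.1
  have hnp : (0:ℝ) < (n:ℝ)+1 := by positivity
  set p : Fin (n+1) → ℝ := fun i => (l i + m i)/2 with hp
  have hpp : ∀ i, 0 < p i := fun i => by
    simp only [hp]; have := hlp i; have := hmp i; positivity
  have hpf : Feasible n p := by
    refine ⟨hpp, ?_⟩
    have h1 := feasible_sum_le hL.1
    have h2 := feasible_sum_le hM.1
    have h3 : (∑ i, p i) = ((∑ i, l i) + (∑ i, m i))/2 := by
      simp only [hp]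
      rw [← Finset.sum_add_distrib, Finset.sum_div]
    rw [div_le_one hnp, h3]
    linarith
  have hs_lm : sigmaB n l = sigmaB n m := le_antisymm (hL.2 _ hM.1) (hM.2 _ hL.1)
  obtain ⟨v, hvpos, hv1, hveq⟩ := exists_perron hpp
  have hQp : (Bmat n p).mulVec v ⬝ᵥ v = sigmaB n p := by
    rw [hveq]
    have hd : (sigmaB n p • v) ⬝ᵥ v = sigmaB n p * ∑ i, v i ^ 2 := by
      simp only [dotProduct, Pi.smul_apply, smul_eq_mul, Finset.mul_sum]
      apply Finset.sum_congr rfl; intro i _; ring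
    rw [hd, hv1, mul_one]
  have hstrict : (Bmat n p).mulVec v ⬝ᵥ v
      < (((Bmat n l).mulVec v ⬝ᵥ v) + ((Bmat n m).mulVec v ⬝ᵥ v))/2 := by
    rw [quadform, quadform, quadform, ← Finset.sum_add_distrib]
    have hRW : (∑ k : Fin (n+1), (2 * (l k ^ (-(1/2):ℝ)) * (v k.castSucc * v k.succ)
        + 2 * (m k ^ (-(1/2):ℝ)) * (v k.castSucc * v k.succ))) / 2
        = ∑ k : Fin (n+1), ((l k ^ (-(1/2):ℝ) + m k ^ (-(1/2):ℝ))/2)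
            * (2 * (v k.castSucc * v k.succ)) := by
      rw [Finset.sum_div]
      apply Finset.sum_congr rfl; intro k _; ring
    rw [hRW]
    have hform : ∀ k : Fin (n+1), 2 * (p k ^ (-(1/2):ℝ)) * (v k.castSucc * v k.succ)
        = (p k ^ (-(1/2):ℝ)) * (2 * (v k.castSucc * v k.succ)) := by intro k; ring
    simp only [hform]
    apply Finset.sum_lt_sum
    · intro k _
      have hvv : 0 < 2 * (v k.castSucc * v k.succ) := by
        have := hvpos k.castSucc; have := hvpos k.succ; positivity
      apply mul_le_mul_of_nonneg_right _ hvv.le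
      have := midpoint_rpow_le (hlp k) (hmp k)
      simpa [hp] using this
    · refine ⟨k₀, Finset.mem_univ k₀, ?_⟩
      have hvv : 0 < 2 * (v k₀.castSucc * v k₀.succ) := by
        have := hvpos k₀.castSucc; have := hvpos k₀.succ; positivity
      apply mul_lt_mul_of_pos_right _ hvv
      have := midpoint_rpow_lt (hlp k₀) (hmp k₀) hk₀
      simpa [hp] using this
  have hQl := quad_le_sigma hlp v
  have hQm := quad_le_sigma hmp v
  rw [hv1, mul_one] at hQl hQm
  have hfin : sigmaB n p < sigmaB n l := by
    rw [← hQp]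
    calc (Bmat n p).mulVec v ⬝ᵥ v
        < (((Bmat n l).mulVec v ⬝ᵥ v) + ((Bmat n m).mulVec v ⬝ᵥ v))/2 := hstrict
      _ ≤ (sigmaB n l + sigmaB n m)/2 := by linarith
      _ = sigmaB n l := by rw [← hs_lm]; ring
  exact absurd (hL.2 _ hpf) (not_le.mpr hfin)


end Perron

/-- existence and uniqueness of the minimizer, which moreover
satisfies the budget constraint with equality. -/
theorem stmt_0 (n : ℕ) (hn : 1 ≤ n) :
    (∃! l : Fin (n+1) → ℝ, IsMinimizer n l) ∧
    (∀ l : Fin (n+1) → ℝ, IsMinimizer n l →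
      (∑ i, l i) / ((n : ℝ) + 1) = 1) := by
  obtain ⟨l, hl⟩ := Perron.exists_minimizer (n := n)
  exact ⟨⟨l, hl, fun m hm => Perron.minimizer_unique hm hl⟩,
    fun m hm => Perron.minimizer_sum_eq hm⟩
end

section
/- For every n ∈ ℕ with n ≥ 1, let λ̃ ∈ ℝ^{n+1} be the vector λ̃ = ((n+1)/n)·(1/2, 1, 1, …, 1, 1/2), i.e., λ̃_0 = λ̃_n = (n+1)/(2n) and λ̃_i = (n+1)/n for 0 < i < n. Then σ(B(λ̃)) = 2 (n/(n+1))^{1/2}. -/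
open Real

noncomputable def ltil (n : ℕ) : Fin (n+1) → ℝ := fun i =>
  if (i : ℕ) = 0 ∨ (i : ℕ) = n then ((n : ℝ) + 1) / (2 * n) else ((n : ℝ) + 1) / n

noncomputable def cc (n : ℕ) : ℝ := Real.sqrt ((n : ℝ) / ((n : ℝ) + 1))

noncomputable def ww (n : ℕ) : Fin (n+2) → ℝ := fun i =>
  if (i : ℕ) = 0 ∨ (i : ℕ) = n + 1 then 1 else Real.sqrt 2

lemma ww_pos (n : ℕ) (i : Fin (n+2)) : 0 < ww n i := by
  unfold ww; split
  · norm_num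
  · exact Real.sqrt_pos.2 (by norm_num)

lemma rpow_neg_half {x : ℝ} (hx : 0 < x) : x ^ (-(1/2) : ℝ) = Real.sqrt x⁻¹ := by
  rw [Real.rpow_neg hx.le, ← Real.sqrt_eq_rpow, Real.sqrt_inv]

lemma val_boundary {n : ℕ} (hn : 1 ≤ n) :
    (((n:ℝ)+1)/(2*n)) ^ (-(1/2):ℝ) = Real.sqrt 2 * cc n := by
  have h1 : (0:ℝ) < n := by exact_mod_cast hn
  have hx : (0:ℝ) < ((n:ℝ)+1)/(2*n) := by positivity
  rw [rpow_neg_half hx]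
  unfold cc
  rw [← Real.sqrt_mul (by norm_num : (0:ℝ) ≤ 2)]
  congr 1
  field_simp

lemma val_mid {n : ℕ} (hn : 1 ≤ n) :
    (((n:ℝ)+1)/n) ^ (-(1/2):ℝ) = cc n := by
  have h1 : (0:ℝ) < n := by exact_mod_cast hn
  have hx : (0:ℝ) < ((n:ℝ)+1)/n := by positivity
  rw [rpow_neg_half hx]
  unfold cc
  congr 1
  rw [inv_div]

lemma Bmat_entry {n : ℕ} (hn : 1 ≤ n) (i j : Fin (n+2)) :
    Bmat n (ltil n) i j =
      if (i:ℕ)+1 = (j:ℕ) ∨ (j:ℕ)+1 = (i:ℕ) then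
        (if min (i:ℕ) (j:ℕ) = 0 ∨ min (i:ℕ) (j:ℕ) = n then Real.sqrt 2 * cc n
         else cc n)
      else 0 := by
  unfold Bmat ltil
  simp only [Matrix.of_apply]
  by_cases h1 : (i:ℕ)+1 = (j:ℕ)
  · rw [dif_pos h1, if_pos (Or.inl h1)]
    try simp only [Fin.val_mk]
    have hmin : min (i:ℕ) (j:ℕ) = (i:ℕ) := by omega
    rw [hmin]
    by_cases hb : (i:ℕ) = 0 ∨ (i:ℕ) = n
    · rw [if_pos hb, if_pos hb, val_boundary hn]
    · rw [if_neg hb, if_neg hb, val_mid hn]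
  · rw [dif_neg h1]
    by_cases h2 : (j:ℕ)+1 = (i:ℕ)
    · rw [dif_pos h2, if_pos (Or.inr h2)]
      try simp only [Fin.val_mk]
      have hmin : min (i:ℕ) (j:ℕ) = (j:ℕ) := by omega
      rw [hmin]
      by_cases hb : (j:ℕ) = 0 ∨ (j:ℕ) = n
      · rw [if_pos hb, if_pos hb, val_boundary hn]
      · rw [if_neg hb, if_neg hb, val_mid hn]
    · rw [dif_neg h2, if_neg (by tauto)]

lemma Bmat_nonneg {n : ℕ} (hn : 1 ≤ n) (i j : Fin (n+2)) :
    0 ≤ Bmat n (ltil n) i j := by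
  rw [Bmat_entry hn]
  unfold cc
  split_ifs <;> positivity

lemma sqrt2_sq : Real.sqrt 2 * Real.sqrt 2 = 2 :=
  Real.mul_self_sqrt (by norm_num)

lemma key {n : ℕ} (hn : 1 ≤ n) :
    (Bmat n (ltil n)).mulVec (ww n) = (2 * cc n) • (ww n) := by
  funext i
  have hlt : (i:ℕ) < n + 2 := i.isLt
  show ∑ j, Bmat n (ltil n) i j * ww n j = (2 * cc n) * ww n i
  rcases eq_or_ne (i:ℕ) 0 with hi0 | hi0
  · rw [Finset.sum_eq_single_of_mem (⟨1, by omega⟩ : Fin (n+2)) (Finset.mem_univ _)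
      (fun k _ hk => by
        have hk' : (k:ℕ) ≠ 1 := by simpa [Fin.ext_iff] using hk
        rw [Bmat_entry hn, if_neg (by omega), zero_mul])]
    rw [Bmat_entry hn]
    simp only [ww, Fin.val_mk, hi0]
    norm_num
    split_ifs <;> first | omega | linear_combination cc n * sqrt2_sq | ring
  rcases eq_or_ne (i:ℕ) (n+1) with hiN | hiN
  · rw [Finset.sum_eq_single_of_mem (⟨n, by omega⟩ : Fin (n+2)) (Finset.mem_univ _)
      (fun k _ hk => by
        have hk' : (k:ℕ) ≠ n := by simpa [Fin.ext_iff] using hk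
        rw [Bmat_entry hn, if_neg (by omega), zero_mul])]
    rw [Bmat_entry hn]
    simp only [ww, Fin.val_mk, hiN]
    norm_num
    split_ifs <;> first | omega | linear_combination cc n * sqrt2_sq | ring
  · have h1 : 1 ≤ (i:ℕ) := by omega
    have h2 : (i:ℕ) ≤ n := by omega
    set j₁ : Fin (n+2) := ⟨(i:ℕ)-1, by omega⟩ with hj₁
    set j₂ : Fin (n+2) := ⟨(i:ℕ)+1, by omega⟩ with hj₂
    have hne : j₂ ≠ j₁ := by simp [hj₁, hj₂, Fin.ext_iff]; omega
    rw [← Finset.add_sum_erase _ _ (Finset.mem_univ j₂),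
      Finset.sum_eq_single_of_mem j₁
        (Finset.mem_erase.2 ⟨hne.symm, Finset.mem_univ _⟩)
        (fun k hk hk1 => by
          have hk2 : k ≠ j₂ := (Finset.mem_erase.1 hk).1
          have hka : (k:ℕ) ≠ (i:ℕ)-1 := by simpa [hj₁, Fin.ext_iff] using hk1
          have hkb : (k:ℕ) ≠ (i:ℕ)+1 := by simpa [hj₂, Fin.ext_iff] using hk2
          rw [Bmat_entry hn, if_neg (by omega), zero_mul])]
    rw [Bmat_entry hn, Bmat_entry hn]
    simp only [ww, Fin.val_mk, hj₁, hj₂]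
    norm_num
    split_ifs <;> first | omega | (simp only [Fin.ext_iff, Fin.val_zero] at * <;> omega) | ring | linear_combination cc n * sqrt2_sq

lemma ub {n : ℕ} (hn : 1 ≤ n) {μ : ℝ}
    (h : ∃ v : Fin (n+2) → ℝ, v ≠ 0 ∧ (Bmat n (ltil n)).mulVec v = μ • v) :
    μ ≤ 2 * cc n := by
  obtain ⟨v, hv, heq⟩ := h
  obtain ⟨i₀, -, hmax⟩ := Finset.exists_max_image Finset.univ
    (fun i => |v i| / ww n i) ⟨⟨0, by omega⟩, Finset.mem_univ _⟩
  set r := |v i₀| / ww n i₀ with hr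
  have hvle : ∀ j, |v j| ≤ r * ww n j := fun j =>
    (div_le_iff₀ (ww_pos n j)).1 (hmax j (Finset.mem_univ _))
  have hvi : |v i₀| = r * ww n i₀ := (div_mul_cancel₀ _ (ww_pos n i₀).ne').symm
  have hrpos : 0 < r := by
    obtain ⟨k, hk⟩ := Function.ne_iff.1 hv
    exact lt_of_lt_of_le (div_pos (abs_pos.2 hk) (ww_pos n k))
      (hmax k (Finset.mem_univ _))
  have h1 : |μ| * |v i₀| ≤ 2 * cc n * |v i₀| := by
    calc |μ| * |v i₀| = |μ * v i₀| := (abs_mul _ _).symm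
      _ = |∑ j, Bmat n (ltil n) i₀ j * v j| := by
          rw [show μ * v i₀ = (Bmat n (ltil n)).mulVec v i₀ by
            rw [heq]; simp [Pi.smul_apply]]
          rfl
      _ ≤ ∑ j, |Bmat n (ltil n) i₀ j * v j| := Finset.abs_sum_le_sum_abs _ _
      _ ≤ ∑ j, Bmat n (ltil n) i₀ j * (r * ww n j) := Finset.sum_le_sum (fun j _ => by
            rw [abs_mul, abs_of_nonneg (Bmat_nonneg hn i₀ j)]
            exact mul_le_mul_of_nonneg_left (hvle j) (Bmat_nonneg hn i₀ j))
      _ = r * ∑ j, Bmat n (ltil n) i₀ j * ww n j := by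
          rw [Finset.mul_sum]; exact Finset.sum_congr rfl (fun j _ => by ring)
      _ = r * (2 * cc n * ww n i₀) := by
          rw [show ∑ j, Bmat n (ltil n) i₀ j * ww n j
              = (Bmat n (ltil n)).mulVec (ww n) i₀ from rfl, key hn]
          simp [Pi.smul_apply]
      _ = 2 * cc n * (r * ww n i₀) := by ring
      _ = 2 * cc n * |v i₀| := by rw [hvi]
  have hvipos : 0 < |v i₀| := by rw [hvi]; exact mul_pos hrpos (ww_pos n i₀)
  exact (le_abs_self μ).trans (le_of_mul_le_mul_right h1 hvipos)

lemma www_ne (n : ℕ) : ww n ≠ 0 := by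
  intro h
  have h0 := congrFun h ⟨0, by omega⟩
  simp [ww] at h0

/-- the Perron root of `B(λ̃)` for `λ̃ = ((n+1)/n)·(1/2,1,…,1,1/2)`. -/
theorem stmt_1 (n : ℕ) (hn : 1 ≤ n) :
    sigmaB n (fun i => if (i : ℕ) = 0 ∨ (i : ℕ) = n
        then ((n : ℝ) + 1) / (2 * n) else ((n : ℝ) + 1) / n)
      = 2 * Real.sqrt ((n : ℝ) / ((n : ℝ) + 1)) := by
  show sigmaB n (ltil n) = 2 * cc n
  unfold sigmaB
  apply le_antisymm
  · exact csSup_le ⟨2 * cc n, ww n, www_ne n, key hn⟩ (fun μ hμ => ub hn hμ)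
  · exact le_csSup ⟨2 * cc n, fun μ hμ => ub hn hμ⟩ ⟨ww n, www_ne n, key hn⟩
end

section
/- Let n ∈ ℕ with n ≥ 1, let λ̄ be a minimizer of σ(B(·)) over Λ_n with σ̄ = σ(B(λ̄)), and let v̄ be a Perron vector of B(λ̄). Then the quantities μ̄_i := v̄_{i+1} v̄_{i+2} λ̄_i^{−3/2}, i = 0,…,n, are all equal; moreover their common value is σ̄ v̄_1² / λ̄_0. -/
open Real

open Matrix Filter Topology

namespace Stmt4Aux

noncomputable def pad (n : ℕ) (b : Fin (n+1) → ℝ) (k : Fin (n+2)) : ℝ :=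
  if h : (k : ℕ) < n+1 then b ⟨k, h⟩ else 0

noncomputable def tri (n : ℕ) (b : Fin (n+1) → ℝ) : Matrix (Fin (n+2)) (Fin (n+2)) ℝ :=
  Matrix.of fun k j =>
    (if (k : ℕ) + 1 = (j : ℕ) then pad n b k else 0) +
    (if (j : ℕ) + 1 = (k : ℕ) then pad n b j else 0)

variable {n : ℕ}

lemma Bmat_eq_tri (m : Fin (n+1) → ℝ) :
    Bmat n m = tri n (fun j => m j ^ (-(1/2) : ℝ)) := by
  ext k j
  simp only [Bmat, tri, pad, Matrix.of_apply]
  split_ifs <;> simp_all <;> omega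

lemma tri_transpose (b : Fin (n+1) → ℝ) : (tri n b)ᵀ = tri n b := by
  ext k j
  simp only [tri, Matrix.transpose_apply, Matrix.of_apply]
  exact add_comm _ _

lemma tri_nonneg {b : Fin (n+1) → ℝ} (hb : ∀ j, 0 ≤ b j) (k j : Fin (n+2)) :
    0 ≤ tri n b k j := by
  simp only [tri, Matrix.of_apply, pad]
  apply add_nonneg <;> (split_ifs <;> first | exact hb _ | norm_num)

lemma tri_mulVec (b : Fin (n+1) → ℝ) (x : Fin (n+2) → ℝ) (k : Fin (n+2)) :
    (tri n b).mulVec x k =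
      (if h : (k : ℕ) < n+1 then b ⟨k, h⟩ * x ⟨(k : ℕ)+1, by omega⟩ else 0) +
      (if h : 0 < (k : ℕ) then
        b ⟨(k : ℕ)-1, by have := k.isLt; omega⟩ * x ⟨(k : ℕ)-1, by have := k.isLt; omega⟩
      else 0) := by
  simp only [Matrix.mulVec, dotProduct, tri, Matrix.of_apply, add_mul]
  rw [Finset.sum_add_distrib]
  congr 1
  · by_cases h : (k : ℕ) < n+1
    · rw [dif_pos h]
      have key : ∀ j : Fin (n+2), (if (k : ℕ) + 1 = (j : ℕ) then pad n b k else 0) * x j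
          = (if j = (⟨(k : ℕ)+1, by omega⟩ : Fin (n+2)) then pad n b k * x j else 0) := by
        intro j
        by_cases hj : (k : ℕ) + 1 = (j : ℕ)
        · rw [if_pos hj, if_pos (Fin.ext hj.symm)]
        · rw [if_neg hj, if_neg (fun he => hj (by rw [he])), zero_mul]
      simp_rw [key]
      rw [Finset.sum_ite_eq' Finset.univ]
      simp only [Finset.mem_univ, if_true, pad, dif_pos h]
    · rw [dif_neg h]
      apply Finset.sum_eq_zero
      intro j _
      rw [if_neg (by have := j.isLt; omega), zero_mul]
  · by_cases h : 0 < (k : ℕ)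
    · rw [dif_pos h]
      have key : ∀ j : Fin (n+2), (if (j : ℕ) + 1 = (k : ℕ) then pad n b j else 0) * x j
          = (if j = (⟨(k : ℕ)-1, by have := k.isLt; omega⟩ : Fin (n+2)) then pad n b j * x j else 0) := by
        intro j
        by_cases hj : (j : ℕ) + 1 = (k : ℕ)
        · rw [if_pos hj, if_pos (Fin.ext (by simp only [Fin.val_mk]; omega))]
        · rw [if_neg hj, if_neg, zero_mul]
          simp only [Fin.ext_iff, Fin.val_mk]
          omega
      simp_rw [key]
      rw [Finset.sum_ite_eq' Finset.univ]
      simp only [Finset.mem_univ, if_true, pad, Fin.val_mk]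
      rw [dif_pos (show (k:ℕ)-1 < n+1 by have := k.isLt; omega)]
    · rw [dif_neg h]
      apply Finset.sum_eq_zero
      intro j _
      rw [if_neg (by omega), zero_mul]

lemma dot_tri (b : Fin (n+1) → ℝ) (x y : Fin (n+2) → ℝ) :
    x ⬝ᵥ (tri n b).mulVec y
      = ∑ j : Fin (n+1), b j * (x j.castSucc * y j.succ + x j.succ * y j.castSucc) := by
  simp only [dotProduct]
  have hrow : ∀ k : Fin (n+2), x k * (tri n b).mulVec y k
      = x k * (if h : (k : ℕ) < n+1 then b ⟨k, h⟩ * y ⟨(k : ℕ)+1, by omega⟩ else 0)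
        + x k * (if h : 0 < (k : ℕ) then
            b ⟨(k : ℕ)-1, by have := k.isLt; omega⟩ * y ⟨(k : ℕ)-1, by have := k.isLt; omega⟩
          else 0) := by
    intro k; rw [tri_mulVec, mul_add]
  rw [Finset.sum_congr rfl (fun k _ => hrow k), Finset.sum_add_distrib]
  have h1 : (∑ k : Fin (n+2), x k * (if h : (k : ℕ) < n+1 then b ⟨k, h⟩ * y ⟨(k : ℕ)+1, by omega⟩ else 0))
      = ∑ j : Fin (n+1), b j * (x j.castSucc * y j.succ) := by
    rw [Fin.sum_univ_castSucc]
    have hlast : ((Fin.last (n+1) : Fin (n+2)) : ℕ) = n+1 := rfl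
    rw [dif_neg (by omega), mul_zero, add_zero]
    apply Finset.sum_congr rfl
    intro j _
    have hc : ((j.castSucc : Fin (n+2)) : ℕ) < n+1 := by simp [j.isLt]
    rw [dif_pos hc]
    have e1 : (⟨((j.castSucc : Fin (n+2)) : ℕ), hc⟩ : Fin (n+1)) = j := by
      apply Fin.ext; simp
    have e2 : (⟨((j.castSucc : Fin (n+2)) : ℕ)+1, by have := hc; omega⟩ : Fin (n+2)) = j.succ := by
      apply Fin.ext; simp
    rw [e1, e2]; ring
  have h2 : (∑ k : Fin (n+2), x k * (if h : 0 < (k : ℕ) then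
        b ⟨(k : ℕ)-1, by have := k.isLt; omega⟩ * y ⟨(k : ℕ)-1, by have := k.isLt; omega⟩ else 0))
      = ∑ j : Fin (n+1), b j * (x j.succ * y j.castSucc) := by
    rw [Fin.sum_univ_succ]
    have h0 : ((0 : Fin (n+2)) : ℕ) = 0 := rfl
    rw [dif_neg (by omega), mul_zero, zero_add]
    apply Finset.sum_congr rfl
    intro j _
    have hc : 0 < ((j.succ : Fin (n+2)) : ℕ) := by simp
    rw [dif_pos hc]
    have e1 : (⟨((j.succ : Fin (n+2)) : ℕ)-1, by have := (j.succ : Fin (n+2)).isLt; omega⟩ : Fin (n+1)) = j := by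
      apply Fin.ext; simp
    have e2 : (⟨((j.succ : Fin (n+2)) : ℕ)-1, by have := (j.succ : Fin (n+2)).isLt; omega⟩ : Fin (n+2)) = j.castSucc := by
      apply Fin.ext; simp
    rw [e1, e2]; ring
  rw [h1, h2, ← Finset.sum_add_distrib]
  apply Finset.sum_congr rfl
  intro j _
  ring

lemma cw_upper (M : Matrix (Fin (n+2)) (Fin (n+2)) ℝ) (hM : ∀ k j, 0 ≤ M k j)
    (w : Fin (n+2) → ℝ) (hw : ∀ k, 0 < w k) (c : ℝ) (hc : 0 ≤ c)
    (hMw : ∀ k, M.mulVec w k ≤ c * w k) :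
    sSup {μ : ℝ | ∃ x, x ≠ 0 ∧ M.mulVec x = μ • x} ≤ c := by
  apply Real.sSup_le _ hc
  rintro μ ⟨x, hx0, hxe⟩
  obtain ⟨j, -, hj⟩ := Finset.exists_max_image Finset.univ (fun k => |x k| / w k)
    ⟨0, Finset.mem_univ 0⟩
  have hxk : ∀ k, |x k| ≤ (|x j| / w j) * w k := by
    intro k
    have := hj k (Finset.mem_univ k)
    calc |x k| = (|x k| / w k) * w k := (div_mul_cancel₀ _ (hw k).ne').symm
    _ ≤ (|x j| / w j) * w k := by
        apply mul_le_mul_of_nonneg_right this (hw k).le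
  have hxj : 0 < |x j| := by
    rcases Function.ne_iff.mp hx0 with ⟨k, hk⟩
    have h1 : 0 < |x k| := abs_pos.mpr hk
    have := hxk k
    by_contra hle
    push_neg at hle
    have : |x j| = 0 := le_antisymm hle (abs_nonneg _)
    rw [this] at hxk
    have := hxk k
    simp only [zero_div, zero_mul] at this
    linarith
  have key : |μ| * |x j| ≤ c * |x j| := by
    have e1 : M.mulVec x j = μ * x j := by
      rw [hxe]; simp
    calc |μ| * |x j| = |M.mulVec x j| := by rw [e1, abs_mul]
    _ = |∑ k, M j k * x k| := by rw [Matrix.mulVec, dotProduct]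
    _ ≤ ∑ k, |M j k * x k| := Finset.abs_sum_le_sum_abs _ _
    _ = ∑ k, M j k * |x k| := by
        apply Finset.sum_congr rfl
        intro k _
        rw [abs_mul, abs_of_nonneg (hM j k)]
    _ ≤ ∑ k, M j k * ((|x j| / w j) * w k) := by
        apply Finset.sum_le_sum
        intro k _
        exact mul_le_mul_of_nonneg_left (hxk k) (hM j k)
    _ = (|x j| / w j) * M.mulVec w j := by
        rw [Matrix.mulVec, dotProduct, Finset.mul_sum]
        apply Finset.sum_congr rfl
        intro k _
        ring
    _ ≤ (|x j| / w j) * (c * w j) := by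
        apply mul_le_mul_of_nonneg_left (hMw j)
        exact div_nonneg (abs_nonneg _) (hw j).le
    _ = c * |x j| := by
        have e2 : |x j| / w j * (c * w j) = c * (|x j| / w j * w j) := by ring
        rw [e2, div_mul_cancel₀ _ (hw j).ne']
  have h2 : |μ| ≤ c := le_of_mul_le_mul_right (by linarith) hxj
  exact (le_abs_self μ).trans h2

noncomputable def solAux (sg : ℝ) (B R : ℕ → ℝ) : ℕ → ℝ × ℝ
  | 0 => (0, R 0 / B 0)
  | (k+1) => ((solAux sg B R k).2,
      (R (k+1) + sg * (solAux sg B R k).2 - B k * (solAux sg B R k).1) / B (k+1))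

lemma tri_hasDerivAt {b : ℝ → Fin (n+1) → ℝ} {c : Fin (n+1) → ℝ} {t0 : ℝ}
    (h : ∀ j, HasDerivAt (fun t => b t j) (c j) t0) (k j : Fin (n+2)) :
    HasDerivAt (fun t => tri n (b t) k j) (tri n c k j) t0 := by
  simp only [tri, pad, Matrix.of_apply]
  apply HasDerivAt.add <;>
    (split_ifs <;> first | exact h _ | exact hasDerivAt_const _ _)

lemma solvable (b : Fin (n+1) → ℝ) (hb : ∀ j, 0 < b j) (sg : ℝ)
    (v : Fin (n+2) → ℝ) (hvpos : ∀ k, 0 < v k)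
    (hev : (tri n b).mulVec v = sg • v)
    (r : Fin (n+2) → ℝ) (hr : v ⬝ᵥ r = 0) :
    ∃ u : Fin (n+2) → ℝ, (tri n b).mulVec u - sg • u = r := by
  classical
  set B : ℕ → ℝ := fun k => if h : k < n+1 then b ⟨k, h⟩ else 1 with hB
  set R : ℕ → ℝ := fun k => if h : k < n+2 then r ⟨k, h⟩ else 0 with hR
  set U : ℕ → ℝ := fun k => (solAux sg B R k).1 with hU
  set u : Fin (n+2) → ℝ := fun k => U (k : ℕ) with hu
  have hU0 : U 0 = 0 := rfl
  have hU1 : U 1 = R 0 / B 0 := rfl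
  have hUrec : ∀ k, U (k+2) = (R (k+1) + sg * U (k+1) - B k * U k) / B (k+1) := by
    intro k
    simp only [hU]
    show (solAux sg B R ((k+1)+1)).1 = _
    simp only [solAux]
  -- the first n+1 rows hold by construction
  have hrow : ∀ k : Fin (n+2), (k : ℕ) < n+1 →
      ((tri n b).mulVec u - sg • u) k = r k := by
    intro k hk
    rw [Pi.sub_apply, Pi.smul_apply, smul_eq_mul, tri_mulVec, dif_pos hk]
    rcases Nat.eq_zero_or_pos (k : ℕ) with h0 | h0
    · rw [dif_neg (by omega)]
      have e1 : u ⟨(k : ℕ)+1, by omega⟩ = U 1 := by simp [hu, h0]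
      have e2 : u k = U 0 := by simp [hu, h0]
      rw [e1, e2, hU0, hU1]
      have eB : B 0 = b ⟨0, by omega⟩ := by simp [hB]
      have eR : R 0 = r ⟨0, by omega⟩ := by simp [hR]
      have ek : k = ⟨0, by omega⟩ := Fin.ext h0
      rw [eB, eR]
      have hbne : b ⟨0, by omega⟩ ≠ 0 := (hb _).ne'
      have e3 : b ⟨(k:ℕ), hk⟩ = b ⟨0, by omega⟩ := by congr 1; exact Fin.ext h0
      rw [e3, mul_div_cancel₀ _ hbne, mul_zero, sub_zero, add_zero, ek]
    · rw [dif_pos h0]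
      have hk1 : (k : ℕ) - 1 + 2 = (k : ℕ) + 1 := by omega
      have hk2 : (k : ℕ) - 1 + 1 = (k : ℕ) := by omega
      have hrec := hUrec ((k : ℕ) - 1)
      rw [hk1, hk2] at hrec
      have e1 : u ⟨(k : ℕ)+1, by omega⟩ = U ((k : ℕ)+1) := rfl
      have e2 : u k = U (k : ℕ) := rfl
      have e3 : u ⟨(k : ℕ)-1, by have := k.isLt; omega⟩ = U ((k : ℕ)-1) := rfl
      rw [e1, e2, e3, hrec]
      have eB1 : B (k : ℕ) = b ⟨(k : ℕ), hk⟩ := by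
        show (if h : (k : ℕ) < n+1 then b ⟨(k : ℕ), h⟩ else 1) = _
        rw [dif_pos hk]
      have eB2 : B ((k : ℕ)-1) = b ⟨(k : ℕ)-1, by omega⟩ := by
        show (if h : (k : ℕ)-1 < n+1 then b ⟨(k : ℕ)-1, h⟩ else 1) = _
        rw [dif_pos (by omega)]
      have eR1 : R (k : ℕ) = r ⟨(k : ℕ), by omega⟩ := by
        show (if h : (k : ℕ) < n+2 then r ⟨(k : ℕ), h⟩ else 0) = _
        rw [dif_pos (by omega)]
      have ek : (⟨(k : ℕ), by omega⟩ : Fin (n+2)) = k := Fin.eta _ _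
      rw [eB1, eB2, eR1, mul_div_cancel₀ _ (hb _).ne', ek]
      ring
  refine ⟨u, ?_⟩
  funext k
  rcases Nat.lt_or_ge (k : ℕ) (n+1) with hk | hk
  · exact hrow k hk
  · -- k is the last index
    have hklast : k = Fin.last (n+1) := by
      apply Fin.ext
      have := k.isLt
      simp only [Fin.val_last]
      omega
    subst hklast
    -- use the dot product identity
    set s : Fin (n+2) → ℝ := fun k => ((tri n b).mulVec u - sg • u) k - r k with hs
    have hdot : v ⬝ᵥ ((tri n b).mulVec u - sg • u - r) = 0 := by
      rw [dotProduct_sub, dotProduct_sub]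
      rw [Matrix.dotProduct_mulVec]
      have : Matrix.vecMul v (tri n b) = sg • v := by
        rw [← tri_transpose b, Matrix.vecMul_transpose, hev]
      rw [this, hr, dotProduct_smul, smul_dotProduct]
      simp
    have hsum : ∑ k : Fin (n+2), v k * s k = 0 := by
      rw [← hdot]
      rfl
    have hterm : ∀ j : Fin (n+1), v j.castSucc * s j.castSucc = 0 := by
      intro j
      have : s j.castSucc = 0 := by
        rw [hs]
        have := hrow j.castSucc (by simp [j.isLt])
        simp only [this, sub_self]
      rw [this, mul_zero]
    rw [Fin.sum_univ_castSucc] at hsum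
    rw [Finset.sum_congr rfl (fun j _ => hterm j), Finset.sum_const_zero, zero_add] at hsum
    have hslast : s (Fin.last (n+1)) = 0 := by
      rcases mul_eq_zero.mp hsum with h | h
      · exact absurd h (hvpos _).ne'
      · exact h
    exact sub_eq_zero.mp hslast

end Stmt4Aux

open Stmt4Aux


set_option maxHeartbeats 1000000 in
/-- at the minimizer, the quantities `μ_i = v̄_{i+1} v̄_{i+2} λ̄_i^{-3/2}`
are all equal, with common value `σ̄ v̄_1² / λ̄_0` (here 0-based indexing of `v̄`). -/
theorem stmt_4 (n : ℕ) (hn : 1 ≤ n) (l : Fin (n+1) → ℝ)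
    (hmin : IsMinimizer n l) (v : Fin (n+2) → ℝ)
    (hv : IsPerronVector n l v) :
    ∀ i : Fin (n+1),
      v i.castSucc * v i.succ * l i ^ (-(3/2) : ℝ)
        = sigmaB n l * v 0 ^ 2 / l 0 := by
  intro i
  obtain ⟨⟨hlpos, hlsum⟩, hminle⟩ := hmin
  obtain ⟨hvpos, hvnorm, hev⟩ := hv
  set sg := sigmaB n l with hsg
  set b0 : Fin (n+1) → ℝ := fun j => l j ^ (-(1/2) : ℝ) with hb0
  have hBl : Bmat n l = tri n b0 := Bmat_eq_tri l
  have hev' : (tri n b0).mulVec v = sg • v := by rw [← hBl]; exact hev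
  have hb0pos : ∀ j, 0 < b0 j := fun j => Real.rpow_pos_of_pos (hlpos j) _
  -- row 0 of the eigenvalue equation
  have hrow0 : b0 0 * v ⟨1, by omega⟩ = sg * v 0 := by
    have h := congrFun hev' 0
    rw [tri_mulVec] at h
    rw [dif_pos (by simp : ((0 : Fin (n+2)) : ℕ) < n+1), dif_neg (by simp)] at h
    simp only [Pi.smul_apply, smul_eq_mul, add_zero] at h
    have e1 : (⟨((0 : Fin (n+2)) : ℕ), by simp⟩ : Fin (n+1)) = 0 := rfl
    have e2 : (⟨((0 : Fin (n+2)) : ℕ)+1, by have : ((0 : Fin (n+2)) : ℕ) = 0 := rfl; omega⟩ : Fin (n+2)) = ⟨1, by omega⟩ := rfl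
    rw [e1, e2] at h
    exact h
  -- the common value
  have hmu0 : v 0 * v ⟨1, by omega⟩ * l 0 ^ (-(3/2) : ℝ) = sg * v 0 ^ 2 / l 0 := by
    have hl0 : (0 : ℝ) < l 0 := hlpos 0
    have hA : (0:ℝ) < l 0 ^ (-(1/2) : ℝ) := Real.rpow_pos_of_pos hl0 _
    have hB : l 0 ^ (-(3/2) : ℝ) = l 0 ^ (-(1/2) : ℝ) / l 0 := by
      rw [eq_div_iff hl0.ne']
      nth_rewrite 2 [← Real.rpow_one (l 0)]
      rw [← Real.rpow_add hl0]
      norm_num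
    have hv1 : v ⟨1, by omega⟩ = sg * v 0 / (l 0 ^ (-(1/2) : ℝ)) := by
      rw [eq_div_iff hA.ne']
      have h := hrow0
      simp only [hb0] at h
      linarith
    rw [hv1, hB]
    field_simp
  by_cases hi0 : i = 0
  · subst hi0
    have e1 : (0 : Fin (n+1)).castSucc = 0 := rfl
    have e2 : (0 : Fin (n+1)).succ = ⟨1, by omega⟩ := rfl
    rw [e1, e2]
    exact hmu0
  · suffices hkey : v i.castSucc * v i.succ * l i ^ (-(3/2) : ℝ)
        = v 0 * v ⟨1, by omega⟩ * l 0 ^ (-(3/2) : ℝ) by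
      rw [hkey]; exact hmu0
    classical
    -- perturbation direction
    set dm : Fin (n+1) → ℝ := fun j => (if j = 0 then 1 else 0) + (if j = i then -1 else 0) with hdm
    set cf : Fin (n+1) → ℝ := fun j => -(1/2) * l j ^ (-(3/2) : ℝ) * dm j with hcf
    set d : ℝ := v ⬝ᵥ (tri n cf).mulVec v with hd
    have hd_val : d = v i.castSucc * v i.succ * l i ^ (-(3/2) : ℝ)
        - v 0 * v ⟨1, by omega⟩ * l 0 ^ (-(3/2) : ℝ) := by
      rw [hd, dot_tri]
      have hterm : ∀ j : Fin (n+1), cf j * (v j.castSucc * v j.succ + v j.succ * v j.castSucc)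
          = (if j = 0 then -(v j.castSucc * v j.succ * l j ^ (-(3/2) : ℝ)) else 0)
            + (if j = i then v j.castSucc * v j.succ * l j ^ (-(3/2) : ℝ) else 0) := by
        intro j
        simp only [hcf, hdm]
        split_ifs with h1 h2
        · subst h1; exact absurd h2.symm hi0
        · ring
        · ring
        · ring
      rw [Finset.sum_congr rfl (fun j _ => hterm j), Finset.sum_add_distrib,
        Finset.sum_ite_eq' Finset.univ, Finset.sum_ite_eq' Finset.univ]
      simp only [Finset.mem_univ, if_true]
      have e1 : (0 : Fin (n+1)).castSucc = 0 := rfl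
      have e2 : (0 : Fin (n+1)).succ = (⟨1, by omega⟩ : Fin (n+2)) := rfl
      rw [e1, e2]
      ring
    have hsum_dm : (∑ j, dm j) = 0 := by
      simp only [hdm]
      rw [Finset.sum_add_distrib, Finset.sum_ite_eq' Finset.univ, Finset.sum_ite_eq' Finset.univ]
      simp
    -- solve for the first-order eigenvector correction u
    set r : Fin (n+2) → ℝ := d • v - (tri n cf).mulVec v with hrdef
    have hvv : v ⬝ᵥ v = 1 := by
      have : v ⬝ᵥ v = ∑ k, v k ^ 2 := by
        simp [dotProduct, sq]
      rw [this, hvnorm]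
    have hvr : v ⬝ᵥ r = 0 := by
      rw [hrdef, dotProduct_sub, dotProduct_smul, hvv, ← hd]
      simp
    obtain ⟨u, hu⟩ := solvable b0 hb0pos sg v hvpos hev' r hvr
    -- the perturbed quantities
    set g : Fin (n+2) → ℝ → ℝ := fun k t =>
      (∑ j, tri n (fun j' => (l j' + t * dm j') ^ (-(1/2) : ℝ)) k j * (v j + t * u j))
        - (sg + t * d) * (v k + t * u k) with hg
    have hb00 : (fun j' => (l j' + (0:ℝ) * dm j') ^ (-(1/2) : ℝ)) = b0 := by
      funext j'
      norm_num
      rfl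
    have hg0 : ∀ k, g k 0 = 0 := by
      intro k
      simp only [hg, zero_mul, add_zero, mul_zero]
      have h1 : (∑ j, tri n b0 k j * v j) = sg * v k := by
        have h2 := congrFun hev' k
        simpa [Matrix.mulVec, dotProduct] using h2
      have h4 : (∑ x : Fin (n+2), tri n (fun j' => l j' ^ (-(1/2) : ℝ)) k x * v x) = sg * v k := h1
      rw [h4]
      ring
    have hwd : ∀ k', HasDerivAt (fun t : ℝ => v k' + t * u k') (u k') 0 := by
      intro k'
      simpa using ((hasDerivAt_id (0:ℝ)).mul_const (u k')).const_add (v k')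
    have hbtd : ∀ j, HasDerivAt (fun t : ℝ => (l j + t * dm j) ^ (-(1/2) : ℝ)) (cf j) 0 := by
      intro j
      have h1 : HasDerivAt (fun t : ℝ => l j + t * dm j) (dm j) 0 := by
        simpa using ((hasDerivAt_id (0:ℝ)).mul_const (dm j)).const_add (l j)
      have h2 : HasDerivAt (fun x : ℝ => x ^ (-(1/2) : ℝ))
          ((-(1/2)) * (l j) ^ ((-(1/2)) - 1 : ℝ)) (l j) :=
        Real.hasDerivAt_rpow_const (Or.inl (hlpos j).ne')
      have e : l j + 0 * dm j = l j := by ring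
      rw [← e] at h2
      have h3 := HasDerivAt.comp 0 h2 h1
      have h4 : HasDerivAt (fun t : ℝ => (l j + t * dm j) ^ (-(1/2) : ℝ))
          ((-(1/2)) * (l j + 0 * dm j) ^ ((-(1/2)) - 1 : ℝ) * dm j) 0 := h3
      convert h4 using 1
      simp only [hcf]
      norm_num
    have hgderiv : ∀ k, HasDerivAt (fun t => g k t) 0 0 := by
      intro k
      have hA : HasDerivAt
          (fun t => ∑ j, tri n (fun j' => (l j' + t * dm j') ^ (-(1/2) : ℝ)) k j * (v j + t * u j))
          (∑ j, (tri n cf k j * v j + tri n b0 k j * u j)) 0 := by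
        apply HasDerivAt.fun_sum
        intro j _
        have hej := tri_hasDerivAt hbtd k j
        have := hej.fun_mul (hwd j)
        refine this.congr_deriv ?_
        rw [hb00]
        ring
      have h1 : HasDerivAt (fun t : ℝ => sg + t * d) d 0 := by
        simpa using ((hasDerivAt_id (0:ℝ)).mul_const d).const_add sg
      have hB : HasDerivAt (fun t => (sg + t * d) * (v k + t * u k)) (d * v k + sg * u k) 0 := by
        have := h1.fun_mul (hwd k)
        refine this.congr_deriv ?_
        ring
      have hAB := hA.sub hB
      have hval : (∑ j, (tri n cf k j * v j + tri n b0 k j * u j)) - (d * v k + sg * u k) = 0 := by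
        rw [Finset.sum_add_distrib]
        have e1 : (∑ j, tri n cf k j * v j) = (tri n cf).mulVec v k := rfl
        have e2 : (∑ j, tri n b0 k j * u j) = (tri n b0).mulVec u k := rfl
        have hu' := congrFun hu k
        simp only [Pi.sub_apply, Pi.smul_apply, smul_eq_mul] at hu'
        have hr' : r k = d * v k - (tri n cf).mulVec v k := by
          rw [hrdef]; simp
        rw [e1, e2]
        rw [hr'] at hu'
        linarith
      rw [hval] at hAB
      exact hAB
    -- Collatz-Wielandt bound for perturbed matrices
    have hkeyt : ∀ t : ℝ, (∀ j, 0 < l j + t * dm j) → (∀ k', 0 < v k' + t * u k') →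
        ∃ k' : Fin (n+2), sg * (v k' + t * u k') ≤
          (tri n (fun j => (l j + t * dm j) ^ (-(1/2) : ℝ))).mulVec (fun k'' => v k'' + t * u k'') k' := by
      intro t hm hw
      have hfeas : Feasible n (fun j => l j + t * dm j) := by
        refine ⟨hm, ?_⟩
        have hseq : (∑ j, (l j + t * dm j)) = ∑ j, l j := by
          rw [Finset.sum_add_distrib, ← Finset.mul_sum, hsum_dm, mul_zero, add_zero]
        rw [hseq]
        exact hlsum
      have h1 : sg ≤ sigmaB n (fun j => l j + t * dm j) := hminle _ hfeas
      have hMnn : ∀ k j, 0 ≤ tri n (fun j => (l j + t * dm j) ^ (-(1/2) : ℝ)) k j :=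
        tri_nonneg (fun j => (Real.rpow_pos_of_pos (hm j) _).le)
      set w' : Fin (n+2) → ℝ := fun k'' => v k'' + t * u k'' with hw'
      set M := tri n (fun j => (l j + t * dm j) ^ (-(1/2) : ℝ)) with hM
      set ct := Finset.univ.sup' Finset.univ_nonempty (fun k' => M.mulVec w' k' / w' k') with hct
      have hctnn : (0 : ℝ) ≤ ct := by
        have h0 : (0:ℝ) ≤ M.mulVec w' 0 / w' 0 := by
          have hnum : (0:ℝ) ≤ ∑ j, M 0 j * w' j :=
            Finset.sum_nonneg (fun j _ => mul_nonneg (hMnn 0 j) (hw j).le)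
          exact div_nonneg hnum (hw 0).le
        exact le_trans h0 (Finset.le_sup' (fun k' => M.mulVec w' k' / w' k') (Finset.mem_univ (0 : Fin (n+2))))
      have h2 : sigmaB n (fun j => l j + t * dm j) ≤ ct := by
        unfold sigmaB
        rw [Bmat_eq_tri]
        apply cw_upper _ hMnn w' hw ct hctnn
        intro k'
        have hle := Finset.le_sup' (fun k' => M.mulVec w' k' / w' k') (Finset.mem_univ k')
        calc M.mulVec w' k' = (M.mulVec w' k' / w' k') * w' k' :=
              (div_mul_cancel₀ _ (hw k').ne').symm
        _ ≤ ct * w' k' := mul_le_mul_of_nonneg_right hle (hw k').le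
      obtain ⟨k', -, hk'⟩ := (Finset.le_sup'_iff _).mp (h1.trans h2)
      exact ⟨k', (le_div_iff₀ (hw k')).mp hk'⟩
    -- uniform positive lower bound for v
    set c0 : ℝ := (Finset.univ.inf' Finset.univ_nonempty v) / 2 with hc0def
    have hinfpos : 0 < Finset.univ.inf' Finset.univ_nonempty v := by
      rw [Finset.lt_inf'_iff]
      intro k _
      exact hvpos k
    have hc0 : 0 < c0 := by rw [hc0def]; linarith
    have hvc0 : ∀ k, c0 < v k := by
      intro k
      have h1 := Finset.inf'_le v (Finset.mem_univ k)
      rw [hc0def]; linarith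
    have hev_w : ∀ᶠ t in nhds (0:ℝ), ∀ k, c0 < v k + t * u k := by
      rw [Filter.eventually_all]
      intro k
      have hcont : ContinuousAt (fun t : ℝ => v k + t * u k) 0 :=
        continuousAt_const.add (continuousAt_id.mul continuousAt_const)
      have h0 : c0 < v k + 0 * u k := by simpa using hvc0 k
      have := hcont (Ioi_mem_nhds h0)
      filter_upwards [this] with t ht
      exact ht
    have hev_m : ∀ᶠ t in nhds (0:ℝ), ∀ j, 0 < l j + t * dm j := by
      rw [Filter.eventually_all]
      intro j
      have hcont : ContinuousAt (fun t : ℝ => l j + t * dm j) 0 :=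
        continuousAt_const.add (continuousAt_id.mul continuousAt_const)
      have h0 : (0:ℝ) < l j + 0 * dm j := by simpa using hlpos j
      have := hcont (Ioi_mem_nhds h0)
      filter_upwards [this] with t ht
      exact ht
    -- slope limits
    have hslope : ∀ k, Filter.Tendsto (fun t => g k t / t) (nhdsWithin 0 {(0:ℝ)}ᶜ) (nhds 0) := by
      intro k
      have h := hgderiv k
      rw [hasDerivAt_iff_tendsto_slope] at h
      have heq : slope (fun t => g k t) 0 = fun t => g k t / t := by
        funext t
        rw [slope_def_field, hg0 k, sub_zero, sub_zero]
      rwa [heq] at h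
    have hmono_pos : nhdsWithin (0:ℝ) (Set.Ioi 0) ≤ nhdsWithin (0:ℝ) {(0:ℝ)}ᶜ :=
      nhdsWithin_mono 0 (fun x hx => by
        simp only [Set.mem_compl_iff, Set.mem_singleton_iff]
        exact ne_of_gt hx)
    have hmono_neg : nhdsWithin (0:ℝ) (Set.Iio 0) ≤ nhdsWithin (0:ℝ) {(0:ℝ)}ᶜ :=
      nhdsWithin_mono 0 (fun x hx => by
        simp only [Set.mem_compl_iff, Set.mem_singleton_iff]
        exact ne_of_lt hx)
    have hGpos : Filter.Tendsto (fun t => (∑ k, |g k t|) / t)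
        (nhdsWithin 0 (Set.Ioi 0)) (nhds 0) := by
      have h1 : Filter.Tendsto (fun t => ∑ k, |g k t / t|)
          (nhdsWithin 0 (Set.Ioi 0)) (nhds 0) := by
        have h2 := tendsto_finset_sum (Finset.univ : Finset (Fin (n+2)))
          (fun k _ => (((hslope k).mono_left hmono_pos).abs))
        simpa using h2
      apply h1.congr'
      filter_upwards [self_mem_nhdsWithin] with t ht
      rw [Finset.sum_div]
      apply Finset.sum_congr rfl
      intro k _
      have ht' : (0:ℝ) < t := ht
      rw [abs_div, abs_of_pos ht']
    have hGneg : Filter.Tendsto (fun t => (∑ k, |g k t|) / (-t))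
        (nhdsWithin 0 (Set.Iio 0)) (nhds 0) := by
      have h1 : Filter.Tendsto (fun t => ∑ k, |g k t / t|)
          (nhdsWithin 0 (Set.Iio 0)) (nhds 0) := by
        have h2 := tendsto_finset_sum (Finset.univ : Finset (Fin (n+2)))
          (fun k _ => (((hslope k).mono_left hmono_neg).abs))
        simpa using h2
      apply h1.congr'
      filter_upwards [self_mem_nhdsWithin] with t ht
      rw [Finset.sum_div]
      apply Finset.sum_congr rfl
      intro k _
      have ht' : t < (0:ℝ) := ht
      rw [abs_div, abs_of_neg ht']
    -- the master inequality
    have hmaster : ∀ t : ℝ, t ≠ 0 → (∀ j, 0 < l j + t * dm j) → (∀ k, c0 < v k + t * u k) →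
        ∃ k', (c0 < v k' + t * u k' ∧ -(t * d) * (v k' + t * u k') ≤ ∑ k, |g k t|) := by
      intro t ht hm hw
      have hwpos : ∀ k', 0 < v k' + t * u k' := fun k' => lt_trans hc0 (hw k')
      obtain ⟨k', hk'⟩ := hkeyt t hm hwpos
      refine ⟨k', hw k', ?_⟩
      have hgb : (tri n (fun j => (l j + t * dm j) ^ (-(1/2) : ℝ))).mulVec
          (fun k'' => v k'' + t * u k'') k'
          = g k' t + (sg + t * d) * (v k' + t * u k') := by
        simp only [hg]
        rw [sub_add_cancel]
        rfl
      rw [hgb] at hk'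
      have h6 : g k' t ≤ ∑ k, |g k t| :=
        le_trans (le_abs_self _) (Finset.single_le_sum (f := fun k => |g k t|)
          (fun k _ => abs_nonneg _) (Finset.mem_univ k'))
      nlinarith [hk', h6]
    clear_value g d c0
    -- d ≤ 0 using positive t
    have hd_le : d ≤ 0 := by
      by_contra hdpos
      push_neg at hdpos
      have hineq : ∀ᶠ t in nhdsWithin (0:ℝ) (Set.Iio 0), d * c0 ≤ (∑ k, |g k t|) / (-t) := by
        filter_upwards [self_mem_nhdsWithin, hev_m.filter_mono nhdsWithin_le_nhds,
          hev_w.filter_mono nhdsWithin_le_nhds] with t ht hm hw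
        have ht' : t < (0:ℝ) := ht
        have htne : t ≠ 0 := ne_of_lt ht'
        obtain ⟨k', hwk', hineq⟩ := hmaster t htne hm hw
        rw [le_div_iff₀ (by linarith : (0:ℝ) < -t)]
        have h7 : (-t) * d * c0 ≤ (-t) * d * (v k' + t * u k') := by
          apply mul_le_mul_of_nonneg_left hwk'.le
          nlinarith
        nlinarith [hineq, h7]
      have hle := ge_of_tendsto hGneg hineq
      nlinarith
    -- d ≥ 0 using negative t
    have hd_ge : 0 ≤ d := by
      by_contra hdneg
      push_neg at hdneg
      have hineq : ∀ᶠ t in nhdsWithin (0:ℝ) (Set.Ioi 0), (-d) * c0 ≤ (∑ k, |g k t|) / t := by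
        filter_upwards [self_mem_nhdsWithin, hev_m.filter_mono nhdsWithin_le_nhds,
          hev_w.filter_mono nhdsWithin_le_nhds] with t ht hm hw
        have ht' : (0:ℝ) < t := ht
        have htne : t ≠ 0 := ne_of_gt ht'
        obtain ⟨k', hwk', hineq⟩ := hmaster t htne hm hw
        rw [le_div_iff₀ ht']
        have h7 : t * (-d) * c0 ≤ t * (-d) * (v k' + t * u k') := by
          apply mul_le_mul_of_nonneg_left hwk'.le
          nlinarith
        nlinarith [hineq, h7]
      have hle := ge_of_tendsto hGpos hineq
      nlinarith
    have hd0 : d = 0 := le_antisymm hd_le hd_ge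
    rw [hd0] at hd_val
    linarith [hd_val]
end

section
/- Let n ∈ ℕ with n ≥ 1, let λ ∈ ℝ^{n+1} have all positive entries, let σ > 0, and let v = (v_1,…,v_{n+2}) ∈ ℝ^{n+2} have all entries positive, Euclidean norm 1, and satisfy B(λ) v = σ v. Suppose the quantities v_{i+1} v_{i+2} λ_i^{−3/2}, i = 0,…,n, are all equal. Set v_0 := 0, v_{n+3} := 0, a_i := (v_i/v_1)^{2/3} for i = 0,…,n+3, and r := σ^{2/3} λ_0^{1/3}. Then a_0 = 0, a_1 = 1, a_2 = r, a_{n+3} = 0, and a_{i−1} + a_{i+1} = r a_i² for all i = 1,…,n+2. -/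
open Real

noncomputable def Laux (n : ℕ) (l : Fin (n+1) → ℝ) : ℕ → ℝ :=
  fun j => if h : j < n+1 then (l ⟨j, h⟩) ^ (-(1/2) : ℝ) else 0

lemma eigen_row (n : ℕ) (l : Fin (n+1) → ℝ) (σ : ℝ) (v : Fin (n+2) → ℝ)
    (heig : (Bmat n l).mulVec v = σ • v)
    (ve : ℕ → ℝ) (hve0 : ve 0 = 0) (hveTop : ve (n+3) = 0)
    (hve : ∀ j : Fin (n+2), ve ((j : ℕ) + 1) = v j)
    (k : ℕ) (hk1 : 1 ≤ k) (hk2 : k ≤ n+2) :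
    Laux n l (k-2) * ve (k-1) + Laux n l (k-1) * ve (k+1) = σ * ve k := by
  set i : Fin (n+2) := ⟨k-1, by omega⟩ with hi
  have hrow := congrFun heig i
  simp only [Matrix.mulVec, dotProduct, Pi.smul_apply, smul_eq_mul] at hrow
  have hsplit : ∀ j : Fin (n+2), Bmat n l i j * v j =
      (if (i:ℕ) + 1 = (j:ℕ) then Laux n l (i:ℕ) * v j else 0)
      + (if (j:ℕ) + 1 = (i:ℕ) then Laux n l (j:ℕ) * v j else 0) := by
    intro j
    simp only [Bmat, Matrix.of_apply, Laux]
    by_cases h1 : (i:ℕ)+1 = (j:ℕ)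
    · have h2 : ¬ ((j:ℕ)+1 = (i:ℕ)) := by omega
      have h3 : (i:ℕ) < n+1 := by have := j.isLt; omega
      rw [dif_pos h1, if_pos h1, if_neg h2, dif_pos h3]; ring
    · by_cases h2 : (j:ℕ)+1 = (i:ℕ)
      · have h3 : (j:ℕ) < n+1 := by have := i.isLt; omega
        rw [dif_neg h1, dif_pos h2, if_neg h1, if_pos h2, dif_pos h3]; ring
      · rw [dif_neg h1, dif_neg h2, if_neg h1, if_neg h2]; ring
  rw [Finset.sum_congr rfl (fun j _ => hsplit j), Finset.sum_add_distrib] at hrow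
  have hS1 : (∑ j : Fin (n+2), if (i:ℕ)+1 = (j:ℕ) then Laux n l (i:ℕ) * v j else 0)
      = Laux n l (k-1) * ve (k+1) := by
    by_cases hk : k ≤ n+1
    · have hiv : (i:ℕ) = k - 1 := rfl
      set j0 : Fin (n+2) := ⟨k, by omega⟩ with hj0
      rw [Finset.sum_eq_single j0]
      · have hc : (i:ℕ)+1 = (j0:ℕ) := by simp only [hiv, hj0]; omega
        rw [if_pos hc]
        have h := hve j0
        simp only [hj0] at h
        rw [h, hiv]
      · intro b _ hb
        have : ¬((i:ℕ)+1 = (b:ℕ)) := by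
          intro h; apply hb; apply Fin.ext; simp only [hj0]; omega
        rw [if_neg this]
      · intro h; exact absurd (Finset.mem_univ _) h
    · have hk' : k = n+2 := by omega
      rw [Finset.sum_eq_zero]
      · have hL : Laux n l (k-1) = 0 := by
          rw [Laux, dif_neg (by omega)]
        rw [hL]; ring
      · intro j _
        refine if_neg ?_
        have := j.isLt
        have hiv : (i:ℕ) = k - 1 := rfl
        omega
  have hS2 : (∑ j : Fin (n+2), if (j:ℕ)+1 = (i:ℕ) then Laux n l (j:ℕ) * v j else 0)
      = Laux n l (k-2) * ve (k-1) := by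
    by_cases hk : 2 ≤ k
    · have hiv : (i:ℕ) = k - 1 := rfl
      set j0 : Fin (n+2) := ⟨k-2, by omega⟩ with hj0
      rw [Finset.sum_eq_single j0]
      · have hc : (j0:ℕ)+1 = (i:ℕ) := by simp only [hiv, hj0]; omega
        rw [if_pos hc]
        have h := hve j0
        simp only [hj0] at h
        rw [show k - 2 + 1 = k - 1 by omega] at h
        rw [h]
      · intro b _ hb
        have : ¬((b:ℕ)+1 = (i:ℕ)) := by
          intro h; apply hb; apply Fin.ext; simp only [hj0]; omega
        rw [if_neg this]
      · intro h; exact absurd (Finset.mem_univ _) h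
    · have hk' : k = 1 := by omega
      rw [Finset.sum_eq_zero]
      · rw [hk', hve0]; ring
      · intro j _
        refine if_neg ?_
        have hiv : (i:ℕ) = k - 1 := rfl
        omega
  rw [hS1, hS2] at hrow
  have hvi : ve k = v i := by
    have h := hve i
    rw [show (i:ℕ) + 1 = k by have : (i:ℕ) = k-1 := rfl; omega] at h
    exact h
  rw [hvi]; linarith

lemma eq_of_pos_of_log_eq {x y : ℝ} (hx : 0 < x) (hy : 0 < y)
    (h : Real.log x = Real.log y) : x = y := by
  rw [← Real.exp_log hx, ← Real.exp_log hy, h]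

/-- assuming the `μ_i` are all equal, the normalized quantities
`a_i = (v_i/v_1)^{2/3}` (1-based indexing, with `v_0 := 0`, `v_{n+3} := 0`) satisfy
`a_0 = 0`, `a_1 = 1`, `a_2 = r`, `a_{n+3} = 0` and the recursion
`a_{i-1} + a_{i+1} = r a_i²` with `r = σ^{2/3} λ_0^{1/3}`. -/
theorem stmt_5 (n : ℕ) (hn : 1 ≤ n) (l : Fin (n+1) → ℝ)
    (hl : ∀ i, 0 < l i) (σ : ℝ) (hσ : 0 < σ)
    (v : Fin (n+2) → ℝ) (hv : ∀ i, 0 < v i) (hnorm : ∑ i, v i ^ 2 = 1)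
    (heig : (Bmat n l).mulVec v = σ • v)
    (hmu : ∀ i j : Fin (n+1),
      v i.castSucc * v i.succ * l i ^ (-(3/2) : ℝ)
        = v j.castSucc * v j.succ * l j ^ (-(3/2) : ℝ))
    (ve : ℕ → ℝ) (hve0 : ve 0 = 0) (hveTop : ve (n+3) = 0)
    (hve : ∀ j : Fin (n+2), ve ((j : ℕ) + 1) = v j)
    (a : ℕ → ℝ) (ha : ∀ i, i ≤ n+3 → a i = (ve i / ve 1) ^ ((2:ℝ)/3))
    (r : ℝ) (hr : r = σ ^ ((2:ℝ)/3) * l 0 ^ ((1:ℝ)/3)) :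
    a 0 = 0 ∧ a 1 = 1 ∧ a 2 = r ∧ a (n+3) = 0 ∧
      ∀ i : ℕ, 1 ≤ i → i ≤ n+2 → a (i-1) + a (i+1) = r * a i ^ 2 := by
  have hl0 : 0 < l 0 := hl 0
  -- positivity of ve on [1, n+2]
  have hvp : ∀ k, 1 ≤ k → k ≤ n+2 → 0 < ve k := by
    intro k h1 h2
    have h := hve ⟨k-1, by omega⟩
    rw [show k - 1 + 1 = k by omega] at h
    rw [h]; exact hv _
  have hv1 : 0 < ve 1 := hvp 1 le_rfl (by omega)
  have hv2 : 0 < ve 2 := hvp 2 (by omega) (by omega)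
  -- the constant μ
  set μ : ℝ := ve 1 * ve 2 * l 0 ^ (-(3/2) : ℝ) with hμdef
  have hμpos : 0 < μ := by positivity
  have hMu : ∀ j (hj : j ≤ n), ve (j+1) * ve (j+2) * (l ⟨j, by omega⟩) ^ (-(3/2) : ℝ) = μ := by
    intro j hj
    have h := hmu ⟨j, by omega⟩ 0
    have e1 : ve (j+1) = v (Fin.castSucc ⟨j, by omega⟩) := by
      have := hve (Fin.castSucc ⟨j, by omega⟩); simpa using this
    have e2 : ve (j+2) = v (Fin.succ ⟨j, by omega⟩) := by
      have := hve (Fin.succ ⟨j, by omega⟩); simpa using this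
    have e3 : ve 1 = v (Fin.castSucc (0 : Fin (n+1))) := by
      have := hve (Fin.castSucc (0 : Fin (n+1))); simpa using this
    have e4 : ve 2 = v (Fin.succ (0 : Fin (n+1))) := by
      have := hve (Fin.succ (0 : Fin (n+1))); simpa using this
    rw [hμdef, e1, e2, e3, e4]
    exact h
  -- row equations
  have hE := eigen_row n l σ v heig ve hve0 hveTop hve
  -- basic row 1 identity : l0^{-1/2} * ve 2 = σ * ve 1
  have hE1 : l 0 ^ (-(1/2) : ℝ) * ve 2 = σ * ve 1 := by
    have h := hE 1 le_rfl (by omega)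
    rw [hve0] at h
    have hL0 : Laux n l 0 = l 0 ^ (-(1/2) : ℝ) := by
      rw [Laux]; rw [dif_pos (by omega)]
      congr 1
    simp only [show (1:ℕ) - 2 = 0 from rfl, show (1:ℕ) - 1 = 0 from rfl, hL0] at h
    linarith
  -- logs
  have hlogE1 : -(1/2) * Real.log (l 0) + Real.log (ve 2) = Real.log σ + Real.log (ve 1) := by
    have := congrArg Real.log hE1
    rw [Real.log_mul (by positivity) (by positivity), Real.log_mul (by positivity) (by positivity),
      Real.log_rpow hl0] at this
    linarith
  have hlogμ : Real.log μ = Real.log (ve 1) + Real.log (ve 2) - (3/2) * Real.log (l 0) := by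
    rw [hμdef, Real.log_mul (by positivity) (by positivity),
      Real.log_mul (by positivity) (by positivity), Real.log_rpow hl0]
    ring
  have hlogr : Real.log r = (2/3) * Real.log σ + (1/3) * Real.log (l 0) := by
    rw [hr, Real.log_mul (by positivity) (by positivity), Real.log_rpow hσ, Real.log_rpow hl0]
  have hrpos : 0 < r := by rw [hr]; positivity
  -- key K : μ^{1/3} * r = σ * (ve 1)^{2/3}
  have hK : μ ^ ((1:ℝ)/3) * r = σ * ve 1 ^ ((2:ℝ)/3) := by
    apply eq_of_pos_of_log_eq (by positivity) (by positivity)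
    rw [Real.log_mul (by positivity) (by positivity),
      Real.log_mul (by positivity) (by positivity),
      Real.log_rpow hμpos, Real.log_rpow hv1, hlogμ, hlogr]
    linarith
  -- term identities
  have hT1 : ∀ j, j ≤ n → Laux n l j * ve (j+1) * ve (j+2) ^ ((1:ℝ)/3)
      = μ ^ ((1:ℝ)/3) * ve (j+1) ^ ((2:ℝ)/3) := by
    intro j hj
    have p1 : 0 < ve (j+1) := hvp _ (by omega) (by omega)
    have p2 : 0 < ve (j+2) := hvp _ (by omega) (by omega)
    have hLj : Laux n l j = (l ⟨j, by omega⟩) ^ (-(1/2) : ℝ) := by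
      rw [Laux]; rw [dif_pos (by omega)]
    have hlj : 0 < l ⟨j, by omega⟩ := hl _
    rw [hLj, ← hMu j hj]
    have e0 : (0:ℝ) < ve (j+1) * ve (j+2) * l ⟨j, by omega⟩ ^ (-(3/2) : ℝ) := by positivity
    apply eq_of_pos_of_log_eq (by positivity) (by positivity)
    rw [Real.log_mul (by positivity) (by positivity),
      Real.log_mul (by positivity) (by positivity),
      Real.log_mul (by positivity) (by positivity),
      Real.log_rpow hlj, Real.log_rpow p2, Real.log_rpow e0, Real.log_rpow p1,
      Real.log_mul (by positivity) (by positivity),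
      Real.log_mul (by positivity) (by positivity),
      Real.log_rpow hlj]
    ring
  have hT2 : ∀ j, j ≤ n → Laux n l j * ve (j+2) * ve (j+1) ^ ((1:ℝ)/3)
      = μ ^ ((1:ℝ)/3) * ve (j+2) ^ ((2:ℝ)/3) := by
    intro j hj
    have p1 : 0 < ve (j+1) := hvp _ (by omega) (by omega)
    have p2 : 0 < ve (j+2) := hvp _ (by omega) (by omega)
    have hLj : Laux n l j = (l ⟨j, by omega⟩) ^ (-(1/2) : ℝ) := by
      rw [Laux]; rw [dif_pos (by omega)]
    have hlj : 0 < l ⟨j, by omega⟩ := hl _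
    rw [hLj, ← hMu j hj]
    have e0 : (0:ℝ) < ve (j+1) * ve (j+2) * l ⟨j, by omega⟩ ^ (-(3/2) : ℝ) := by positivity
    apply eq_of_pos_of_log_eq (by positivity) (by positivity)
    rw [Real.log_mul (by positivity) (by positivity),
      Real.log_mul (by positivity) (by positivity),
      Real.log_mul (by positivity) (by positivity),
      Real.log_rpow hlj, Real.log_rpow p1, Real.log_rpow e0, Real.log_rpow p2,
      Real.log_mul (by positivity) (by positivity),
      Real.log_mul (by positivity) (by positivity),
      Real.log_rpow hlj]
    ring
  -- the master identity C
  have hC : ∀ k, 1 ≤ k → k ≤ n+2 →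
      μ ^ ((1:ℝ)/3) * ve (k-1) ^ ((2:ℝ)/3) + μ ^ ((1:ℝ)/3) * ve (k+1) ^ ((2:ℝ)/3)
        = σ * ve k ^ ((4:ℝ)/3) := by
    intro k h1 h2
    have hkpos : 0 < ve k := hvp k h1 h2
    have hEk := hE k h1 h2
    have hmul := congrArg (fun x => x * ve k ^ ((1:ℝ)/3)) hEk
    simp only [add_mul] at hmul
    -- term 1
    have ht1 : Laux n l (k-2) * ve (k-1) * ve k ^ ((1:ℝ)/3)
        = μ ^ ((1:ℝ)/3) * ve (k-1) ^ ((2:ℝ)/3) := by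
      by_cases hk2' : 2 ≤ k
      · have := hT1 (k-2) (by omega)
        rw [show k - 2 + 1 = k - 1 by omega, show k - 2 + 2 = k by omega] at this
        exact this
      · have hk1' : k = 1 := by omega
        rw [hk1']
        simp [hve0, Real.zero_rpow (by norm_num : ((2:ℝ)/3) ≠ 0)]
    -- term 2
    have ht2 : Laux n l (k-1) * ve (k+1) * ve k ^ ((1:ℝ)/3)
        = μ ^ ((1:ℝ)/3) * ve (k+1) ^ ((2:ℝ)/3) := by
      by_cases hk2' : k ≤ n+1
      · have := hT2 (k-1) (by omega)
        rw [show k - 1 + 2 = k + 1 by omega, show k - 1 + 1 = k by omega] at this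
        exact this
      · have hk1' : k = n+2 := by omega
        have hL : Laux n l (k-1) = 0 := by rw [Laux]; rw [dif_neg (by omega)]
        rw [hL, hk1', show n + 2 + 1 = n + 3 from rfl, hveTop,
          Real.zero_rpow (by norm_num : ((2:ℝ)/3) ≠ 0)]
        ring
    have hRHS : σ * ve k * ve k ^ ((1:ℝ)/3) = σ * ve k ^ ((4:ℝ)/3) := by
      rw [show ((4:ℝ)/3) = 1 + 1/3 by norm_num, Real.rpow_add hkpos, Real.rpow_one]
      ring
    rw [ht1, ht2, hRHS] at hmul
    exact hmul
  -- a 0 = 0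
  have ha0 : a 0 = 0 := by
    rw [ha 0 (by omega), hve0, zero_div, Real.zero_rpow (by norm_num : ((2:ℝ)/3) ≠ 0)]
  -- a 1 = 1
  have ha1 : a 1 = 1 := by
    rw [ha 1 (by omega), div_self hv1.ne', Real.one_rpow]
  -- a 2 = r
  have ha2 : a 2 = r := by
    rw [ha 2 (by omega)]
    apply eq_of_pos_of_log_eq (by positivity) hrpos
    rw [Real.log_rpow (by positivity), Real.log_div hv2.ne' hv1.ne', hlogr]
    linarith
  -- a (n+3) = 0
  have haT : a (n+3) = 0 := by
    rw [ha (n+3) le_rfl, hveTop, zero_div, Real.zero_rpow (by norm_num : ((2:ℝ)/3) ≠ 0)]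
  refine ⟨ha0, ha1, ha2, haT, ?_⟩
  intro i h1 h2
  have hipos : 0 < ve i := hvp i h1 h2
  have hXnn : 0 ≤ ve (i-1) := by
    rcases Nat.eq_or_lt_of_le h1 with h | h
    · rw [← h]; simp [hve0]
    · exact le_of_lt (hvp _ (by omega) (by omega))
  have hZnn : 0 ≤ ve (i+1) := by
    rcases Nat.eq_or_lt_of_le (show i+1 ≤ n+3 by omega) with h | h
    · rw [h, hveTop]
    · exact le_of_lt (hvp _ (by omega) (by omega))
  rw [ha (i-1) (by omega), ha (i+1) (by omega), ha i (by omega)]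
  rw [Real.div_rpow hXnn hv1.le, Real.div_rpow hZnn hv1.le, Real.div_rpow hipos.le hv1.le]
  have hCi := hC i h1 h2
  set M := μ ^ ((1:ℝ)/3) with hM
  set b := ve 1 ^ ((2:ℝ)/3) with hb
  have hMpos : 0 < M := by positivity
  have hbpos : 0 < b := by positivity
  have hsum : ve (i-1) ^ ((2:ℝ)/3) + ve (i+1) ^ ((2:ℝ)/3) = σ * ve i ^ ((4:ℝ)/3) / M := by
    field_simp
    linarith [hCi]
  have hr' : r = σ * b / M := by
    field_simp
    linarith [hK]
  have hsq : (ve i ^ ((2:ℝ)/3)) ^ 2 = ve i ^ ((4:ℝ)/3) := by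
    rw [← Real.rpow_natCast (ve i ^ ((2:ℝ)/3)) 2, ← Real.rpow_mul hipos.le]
    norm_num
  have hbsq : b ^ 2 = ve 1 ^ ((4:ℝ)/3) := by
    rw [hb, ← Real.rpow_natCast (ve 1 ^ ((2:ℝ)/3)) 2, ← Real.rpow_mul hv1.le]
    norm_num
  rw [← add_div, hsum, hr', div_pow, hsq, hbsq]
  have hb43 : ve 1 ^ ((4:ℝ)/3) = b * b := by
    rw [hb, ← Real.rpow_add hv1]; norm_num
  rw [hb43]
  field_simp
end

section
/- Let n ∈ ℕ with n ≥ 1, let λ ∈ ℝ^{n+1} have all positive entries, let σ > 0, and let v = (v_1,…,v_{n+2}) ∈ ℝ^{n+2} have all entries positive, Euclidean norm 1, and satisfy B(λ) v = σ v. Suppose the quantities v_{i+1} v_{i+2} λ_i^{−3/2}, i = 0,…,n, are all equal. Set a_i := (v_i/v_1)^{2/3} for i = 1,…,n+2. Then λ_i = (λ_0/σ)^{2/3} a_{i+1} a_{i+2} for all i = 0,…,n. -/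
open Real

/-- assuming the `μ_i` are all equal,
`λ_i = (λ_0/σ)^{2/3} a_{i+1} a_{i+2}` where `a_i = (v_i/v_1)^{2/3}`
(1-based indexing of `v` and `a`). -/
theorem stmt_6 (n : ℕ) (hn : 1 ≤ n) (l : Fin (n+1) → ℝ)
    (hl : ∀ i, 0 < l i) (σ : ℝ) (hσ : 0 < σ)
    (v : Fin (n+2) → ℝ) (hv : ∀ i, 0 < v i) (hnorm : ∑ i, v i ^ 2 = 1)
    (heig : (Bmat n l).mulVec v = σ • v)
    (hmu : ∀ i j : Fin (n+1),
      v i.castSucc * v i.succ * l i ^ (-(3/2) : ℝ)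
        = v j.castSucc * v j.succ * l j ^ (-(3/2) : ℝ))
    (a : ℕ → ℝ)
    (ha : ∀ j : Fin (n+2), a ((j : ℕ) + 1) = (v j / v 0) ^ ((2:ℝ)/3)) :
    ∀ i : Fin (n+1),
      l i = (l 0 / σ) ^ ((2:ℝ)/3) * (a ((i : ℕ) + 1) * a ((i : ℕ) + 2)) := by
  intro i
  have hv0 := hv 0
  have hv1 := hv 1
  have hl0 := hl 0
  have hli := hl i
  have hvA := hv i.castSucc
  have hvB := hv i.succ
  -- row 0 of eigen equation
  have hrow : σ * v 0 = l 0 ^ (-(1/2) : ℝ) * v 1 := by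
    have h := congrFun heig 0
    rw [Matrix.mulVec, dotProduct] at h
    have hval1 : ((1 : Fin (n+2)) : ℕ) = 1 := by simp
    have hsum : ∑ j, Bmat n l 0 j * v j = l 0 ^ (-(1/2):ℝ) * v 1 := by
      rw [Finset.sum_eq_single (1 : Fin (n+2))]
      · have h1 : ((0 : Fin (n+2)) : ℕ) + 1 = ((1 : Fin (n+2)) : ℕ) := by
          simp [hval1]
        simp [Bmat, h1]
      · intro j _ hj
        have hjv : ¬ ((0 : Fin (n+2)) : ℕ) + 1 = (j : ℕ) := by
          intro hc
          apply hj
          apply Fin.ext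
          rw [hval1]
          simpa using hc.symm
        have hjv2 : ¬ ((j : Fin (n+2)) : ℕ) + 1 = ((0 : Fin (n+2)) : ℕ) := by
          simp
        simp only [Bmat, Matrix.of_apply, dif_neg hjv, dif_neg hjv2, zero_mul]
      · intro h; exact absurd (Finset.mem_univ _) h
    rw [hsum] at h
    simpa using h.symm
  -- key rpow facts
  set X := l 0 ^ ((1:ℝ)/2) with hX
  set Y := l 0 ^ ((3:ℝ)/2) with hY
  set Z := l i ^ ((3:ℝ)/2) with hZ
  have hXpos : 0 < X := Real.rpow_pos_of_pos hl0 _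
  have hYpos : 0 < Y := Real.rpow_pos_of_pos hl0 _
  have hZpos : 0 < Z := Real.rpow_pos_of_pos hli _
  have hYX : Y = l 0 * X := by
    rw [hY, hX]
    nth_rewrite 2 [← Real.rpow_one (l 0)]
    rw [← Real.rpow_add hl0]; norm_num
  have hmu0 := hmu i 0
  simp only [Fin.castSucc_zero, Fin.succ_zero_eq_one] at hmu0
  rw [show (-(3/2) : ℝ) = -((3:ℝ)/2) by norm_num, Real.rpow_neg hli.le,
    Real.rpow_neg hl0.le, ← hZ, ← hY] at hmu0
  have hmu' : v i.castSucc * v i.succ * Y = v 0 * v 1 * Z := by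
    field_simp at hmu0
    linarith [hmu0]
  -- rewrite sigma
  have hσeq : σ = X⁻¹ * v 1 / v 0 := by
    rw [show (-(1/2) : ℝ) = -((1:ℝ)/2) by norm_num, Real.rpow_neg hl0.le, ← hX] at hrow
    field_simp at hrow ⊢
    linarith [hrow]
  have hbase : (l 0 / σ) * ((v i.castSucc / v 0) * (v i.succ / v 0)) = l i ^ ((3:ℝ)/2) := by
    rw [hσeq, ← hZ]
    field_simp
    linear_combination hmu' - v i.castSucc * v i.succ * hYX
  have key : l i = ((l 0 / σ) * ((v i.castSucc / v 0) * (v i.succ / v 0))) ^ ((2:ℝ)/3) := by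
    rw [hbase, ← Real.rpow_mul hli.le]
    norm_num
  -- rewrite a's
  have ha1 : a ((i : ℕ) + 1) = (v i.castSucc / v 0) ^ ((2:ℝ)/3) := by
    have := ha i.castSucc
    simpa using this
  have ha2 : a ((i : ℕ) + 2) = (v i.succ / v 0) ^ ((2:ℝ)/3) := by
    have := ha i.succ
    simpa [Fin.val_succ] using this
  rw [ha1, ha2, key]
  rw [Real.mul_rpow, Real.mul_rpow]
  · positivity
  · positivity
  · positivity
  · positivity
end
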